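/- arXiv:1606.02247 — 4 statements merged into one kernel-verified Lean document; each statement's English description precedes it below -/
import Mathlib

section
/- Let m ≥ 2, n = m(m−1)/2, and let (a_1, …, a_n) be any enumeration of the set of transvections {s_{i,j} : 1 ≤ i < j ≤ m} that is a Mal'cev basis of UT_m(ℤ). Then the Nickel module of UT_m(ℤ) with respect to (a_1, …, a_n), i.e., the ℚ-linear span of {g • t_k : g ∈ UT_m(ℤ), 1 ≤ k ≤ n}, has ℚ-dimension at most 3^m. -/
open scoped TensorProduct

/-- diagonal entries of a product of two upper triangular matrices -/
private lemma diag_mul_triangular {m : ℕ} {A B : Matrix (Fin m) (Fin m) ℤ}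
    (hA : ∀ i j : Fin m, j < i → A i j = 0) (hB : ∀ i j : Fin m, j < i → B i j = 0)
    (i : Fin m) : (A * B) i i = A i i * B i i := by
  rw [Matrix.mul_apply]
  apply Finset.sum_eq_single
  · intro k _ hk
    rcases lt_or_gt_of_ne hk with h | h
    · rw [hA i k h, zero_mul]
    · rw [hB k i h, mul_zero]
  · intro h; exact absurd (Finset.mem_univ i) h

/-- The group of upper unitriangular `m × m` integer matrices, as a subgroup of the
units of the matrix ring. -/
def UT (m : ℕ) : Subgroup (Matrix (Fin m) (Fin m) ℤ)ˣ where
  carrier := {A | (∀ i j : Fin m, j < i → A.val i j = 0) ∧ ∀ i : Fin m, A.val i i = 1}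
  one_mem' := by
    refine ⟨fun i j hji => ?_, fun i => ?_⟩
    · simp [Matrix.one_apply, (ne_of_lt hji).symm]
    · simp
  mul_mem' := by
    rintro A B ⟨hA1, hA2⟩ ⟨hB1, hB2⟩
    refine ⟨fun i j hji => ?_, fun i => ?_⟩
    · rw [Units.val_mul, Matrix.mul_apply]
      apply Finset.sum_eq_zero
      intro k _
      rcases lt_or_ge k i with h | h
      · rw [hA1 i k h, zero_mul]
      · rw [hB1 k j (lt_of_lt_of_le hji h), mul_zero]
    · rw [Units.val_mul, diag_mul_triangular hA1 hB1, hA2, hB2, one_mul]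
  inv_mem' := by
    rintro A ⟨hA1, hA2⟩
    have hinv : ∀ i j : Fin m, j < i → (A⁻¹).val i j = 0 := by
      haveI : Invertible A.val := A.isUnit.invertible
      have h1 : Matrix.BlockTriangular A.val (id : Fin m → Fin m) := fun i j h => hA1 i j h
      have h2 := Matrix.blockTriangular_inv_of_blockTriangular h1
      intro i j hji
      rw [Matrix.coe_units_inv]
      exact h2 hji
    refine ⟨hinv, fun i => ?_⟩
    have h3 : ((A⁻¹).val * A.val) i i = (A⁻¹).val i i * A.val i i :=
      diag_mul_triangular hinv hA1 i
    rw [Units.inv_mul] at h3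
    rw [hA2] at h3
    simpa [Matrix.one_apply] using h3.symm

/-- The transvection `s_{i,j} = 1 + E_{i,j}` as an element of `UT m`. -/
def sUT {m : ℕ} (i j : Fin m) (hij : i < j) : ↥(UT m) :=
  ⟨⟨Matrix.transvection i j (1 : ℤ), Matrix.transvection i j (-1 : ℤ),
    by rw [Matrix.transvection_mul_transvection_same _ _ (ne_of_lt hij)]; simp,
    by rw [Matrix.transvection_mul_transvection_same _ _ (ne_of_lt hij)]; simp⟩,
   by
    constructor
    · intro a b hba
      show Matrix.transvection i j (1 : ℤ) a b = 0
      rw [Matrix.transvection, Matrix.add_apply, Matrix.one_apply,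
        if_neg (ne_of_gt hba)]
      rw [Matrix.single_apply_of_ne]
      · ring
      · rintro ⟨rfl, rfl⟩
        exact absurd hij (not_lt_of_gt hba)
    · intro a
      show Matrix.transvection i j (1 : ℤ) a a = 1
      rw [Matrix.transvection, Matrix.add_apply, Matrix.one_apply, if_pos rfl]
      rw [Matrix.single_apply_of_ne]
      · ring
      · rintro ⟨rfl, rfl⟩
        exact lt_irrefl _ hij⟩

/-- The set of index pairs `(i, j)` with `i < j`. -/
abbrev Pears (m : ℕ) := {p : Fin m × Fin m // p.1 < p.2}

/-- The ordered product `a 0 ^ x 0 * a 1 ^ x 1 * ⋯ * a (n-1) ^ x (n-1)`. -/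
def malcevProd {G : Type*} [Group G] {n : ℕ} (a : Fin n → G) (x : Fin n → ℤ) : G :=
  ((List.finRange n).map fun i => a i ^ x i).prod

open scoped commutatorElement

/-- `a` is a Mal'cev basis: normal forms are unique and the subgroups
`G_i = ⟨a_i, …, a_n⟩` form a central series. -/
def IsMalcevBasis {G : Type*} [Group G] {n : ℕ} (a : Fin n → G) : Prop :=
  Function.Bijective (malcevProd a) ∧
    ∀ i : Fin n, ∀ g : G, ∀ h ∈ Subgroup.closure {y | ∃ j : Fin n, i ≤ j ∧ y = a j},
      ⁅g, h⁆ ∈ Subgroup.closure {y | ∃ j : Fin n, i < j ∧ y = a j}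

/- ===================== auxiliary development ===================== -/
namespace NickelAux

variable {m : ℕ}

/-- matrix entry of an element of `UT m`, as a rational number -/
def ent (h : ↥(UT m)) (i j : Fin m) : ℚ :=
  (((h : (Matrix (Fin m) (Fin m) ℤ)ˣ) : Matrix (Fin m) (Fin m) ℤ) i j : ℚ)

lemma ent_lower (h : ↥(UT m)) {i j : Fin m} (hji : j < i) : ent h i j = 0 := by
  have := h.2.1 i j hji
  simp [ent, this]

lemma ent_diag (h : ↥(UT m)) (i : Fin m) : ent h i i = 1 := by
  have := h.2.2 i
  simp [ent, this]

lemma ent_mul (h g : ↥(UT m)) (i j : Fin m) :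
    ent (h * g) i j = ∑ l : Fin m, ent h i l * ent g l j := by
  have : (((h * g : ↥(UT m)) : (Matrix (Fin m) (Fin m) ℤ)ˣ) : Matrix (Fin m) (Fin m) ℤ)
      = ((h : (Matrix (Fin m) (Fin m) ℤ)ˣ) : Matrix (Fin m) (Fin m) ℤ) *
        ((g : (Matrix (Fin m) (Fin m) ℤ)ˣ) : Matrix (Fin m) (Fin m) ℤ) := rfl
  simp only [ent, this, Matrix.mul_apply]
  push_cast
  rfl

/-- the chain monomial function -/
def chi (c : List (Fin m × Fin m)) (h : ↥(UT m)) : ℚ :=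
  (c.map fun p => ent h p.1 p.2).prod

lemma chi_nil : (chi ([] : List (Fin m × Fin m))) = (1 : ↥(UT m) → ℚ) := by
  funext h; simp [chi]

lemma chi_cons (p : Fin m × Fin m) (c : List (Fin m × Fin m)) :
    chi (p :: c) = (fun h => ent h p.1 p.2) * chi c := by
  funext h; simp [chi]

lemma chi_append (c c' : List (Fin m × Fin m)) :
    chi (c ++ c') = chi c * chi c' := by
  funext h; simp [chi]

/-- chains inside the interval `[lo, hi]` -/
def CIn (lo hi : Fin m) : List (Fin m × Fin m) → Prop
  | [] => True
  | p :: c => lo ≤ p.1 ∧ p.1 < p.2 ∧ p.2 ≤ hi ∧ CIn p.2 hi c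

lemma CIn.mono {lo hi lo' hi' : Fin m} {c : List (Fin m × Fin m)}
    (h : CIn lo hi c) (h1 : lo' ≤ lo) (h2 : hi ≤ hi') : CIn lo' hi' c := by
  induction c generalizing lo lo' with
  | nil => trivial
  | cons p c ih =>
      obtain ⟨ha, hb, hc, hd⟩ := h
      exact ⟨le_trans h1 ha, hb, le_trans hc h2, ih hd le_rfl⟩

lemma CIn.append {lo mid hi : Fin m} {c c' : List (Fin m × Fin m)}
    (hlm : lo ≤ mid) (hmh : mid ≤ hi) (h : CIn lo mid c) (h' : CIn mid hi c') :
    CIn lo hi (c ++ c') := by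
  induction c generalizing lo with
  | nil => exact h'.mono hlm le_rfl
  | cons p c ih =>
      obtain ⟨ha, hb, hc, hd⟩ := h
      exact ⟨ha, hb, le_trans hc hmh, ih hc hd⟩

/-- span of chain monomials over chains in `[lo, hi]` -/
def V (lo hi : Fin m) : Submodule ℚ (↥(UT m) → ℚ) :=
  Submodule.span ℚ {f | ∃ c, CIn lo hi c ∧ f = chi c}

lemma V_mono {lo hi lo' hi' : Fin m} (h1 : lo' ≤ lo) (h2 : hi ≤ hi') :
    V lo hi ≤ V lo' hi' := by
  apply Submodule.span_le.2
  rintro f ⟨c, hc, rfl⟩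
  exact Submodule.subset_span ⟨c, hc.mono h1 h2, rfl⟩

lemma V_mul_mem {lo mid hi : Fin m} (hlm : lo ≤ mid) (hmh : mid ≤ hi)
    {f f' : ↥(UT m) → ℚ} (hf : f ∈ V lo mid) (hf' : f' ∈ V mid hi) :
    f * f' ∈ V lo hi := by
  have h1 : f * f' ∈ V lo mid * V mid hi := Submodule.mul_mem_mul hf hf'
  have h2 : V lo mid * V mid hi ≤ V lo hi := by
    rw [V, V, Submodule.span_mul_span]
    apply Submodule.span_le.2
    rintro x ⟨f1, ⟨c1, hc1, rfl⟩, f2, ⟨c2, hc2, rfl⟩, rfl⟩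
    exact Submodule.subset_span ⟨c1 ++ c2, CIn.append hlm hmh hc1 hc2, (chi_append c1 c2).symm⟩
  exact h2 h1

lemma one_mem_V (lo hi : Fin m) : (1 : ↥(UT m) → ℚ) ∈ V lo hi :=
  Submodule.subset_span ⟨[], trivial, chi_nil.symm⟩

lemma ent_mem_V {lo hi u v : Fin m} (h1 : lo ≤ u) (h2 : u < v) (h3 : v ≤ hi) :
    (fun h => ent h u v) ∈ V lo hi := by
  refine Submodule.subset_span ⟨[(u, v)], ⟨h1, h2, h3, trivial⟩, ?_⟩
  funext h; simp [chi]

end NickelAux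
namespace NickelAux
variable {m : ℕ}

/-- coercion `UT m → Matrix` as a monoid hom -/
def toMat (m : ℕ) : ↥(UT m) →* Matrix (Fin m) (Fin m) ℤ :=
  (Units.coeHom _).comp (UT m).subtype

lemma toMat_apply (h : ↥(UT m)) :
    toMat m h = ((h : (Matrix (Fin m) (Fin m) ℤ)ˣ) : Matrix (Fin m) (Fin m) ℤ) := rfl

lemma sUT_zpow_val (i j : Fin m) (hij : i < j) (z : ℤ) :
    toMat m (sUT i j hij ^ z) = Matrix.transvection i j z := by
  induction z using Int.induction_on with
  | zero => simp [Matrix.transvection]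
  | succ k ih =>
      have h1 : sUT i j hij ^ ((k : ℤ) + 1) = sUT i j hij ^ (k : ℤ) * sUT i j hij :=
        zpow_add_one _ _
      rw [h1, map_mul, ih]
      have : toMat m (sUT i j hij) = Matrix.transvection i j 1 := rfl
      rw [this, Matrix.transvection_mul_transvection_same _ _ (ne_of_lt hij)]
  | pred k ih =>
      have h1 : sUT i j hij ^ (-(k : ℤ) - 1) = sUT i j hij ^ (-(k : ℤ)) * (sUT i j hij)⁻¹ :=
        zpow_sub_one _ _
      rw [h1, map_mul, ih]
      have : toMat m (sUT i j hij)⁻¹ = Matrix.transvection i j (-1) := rfl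
      rw [this, Matrix.transvection_mul_transvection_same _ _ (ne_of_lt hij)]
      congr 1

/-- entry of `s^z * w` -/
lemma ent_sUT_zpow_mul (i j : Fin m) (hij : i < j) (z : ℤ) (w : ↥(UT m)) (u v : Fin m) :
    ent (sUT i j hij ^ z * w) u v
      = ent w u v + (if u = i then (z : ℚ) * ent w j v else 0) := by
  have hm : toMat m (sUT i j hij ^ z * w) = Matrix.transvection i j z * toMat m w :=
    by rw [map_mul, sUT_zpow_val]
  have : ent (sUT i j hij ^ z * w) u v = ((Matrix.transvection i j z * toMat m w) u v : ℚ) := by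
    rw [ent, ← toMat_apply, hm]
  rw [this, Matrix.transvection, Matrix.add_mul, Matrix.one_mul, Matrix.add_apply]
  rcases eq_or_ne u i with rfl | hu
  · rw [Matrix.single_mul_apply_same]
    simp [ent, toMat_apply]
  · have : (Matrix.single i j z * toMat m w) u v = 0 :=
      Matrix.single_mul_apply_of_ne z i j u v hu _
    rw [this]
    simp [ent, toMat_apply, hu]

end NickelAux
namespace NickelAux
section Main
variable {m n : ℕ} (u : Fin n → Fin m × Fin m) (t : Fin n → ↥(UT m) → ℚ)

/-- path-sum recursion for the entries of an ordered product of transvection powers -/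
def FF (x : Fin n → ℚ) : List (Fin n) → Fin m → Fin m → ℚ
  | [], i, j => if i = j then 1 else 0
  | k :: L, i, j => FF x L i j + (if i = (u k).1 then x k * FF x L (u k).2 j else 0)

variable (hlt : ∀ k, (u k).1 < (u k).2)

lemma ent_one (i j : Fin m) : ent (1 : ↥(UT m)) i j = (if i = j then 1 else 0 : ℚ) := by
  have : (((1 : ↥(UT m)) : (Matrix (Fin m) (Fin m) ℤ)ˣ) : Matrix (Fin m) (Fin m) ℤ) = 1 := rfl
  rw [ent, this, Matrix.one_apply]
  split <;> simp

include hlt in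
lemma FF_lower (x : Fin n → ℚ) : ∀ (L : List (Fin n)) (i j : Fin m), j < i → FF u x L i j = 0 := by
  intro L
  induction L with
  | nil => intro i j hji; simp [FF, (ne_of_gt hji)]
  | cons k L ih =>
      intro i j hji
      rw [FF, ih i j hji, zero_add]
      rcases eq_or_ne i (u k).1 with rfl | hi
      · rw [if_pos rfl, ih _ _ (hji.trans (hlt k)), mul_zero]
      · rw [if_neg hi]

include hlt in
lemma FF_diag (x : Fin n → ℚ) : ∀ (L : List (Fin n)) (j : Fin m), FF u x L j j = 1 := by
  intro L
  induction L with
  | nil => simp [FF]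
  | cons k L ih =>
      intro j
      rw [FF, ih]
      rcases eq_or_ne j (u k).1 with rfl | hj
      · rw [if_pos rfl, FF_lower u hlt x L _ _ (hlt k), mul_zero, add_zero]
      · rw [if_neg hj, add_zero]

variable {a : Fin n → ↥(UT m)} (ha : ∀ k, a k = sUT (u k).1 (u k).2 (hlt k))

include ha in
lemma ent_listProd (z : Fin n → ℤ) :
    ∀ (L : List (Fin n)) (i j : Fin m),
      ent ((L.map fun k => a k ^ z k).prod) i j = FF u (fun k => (z k : ℚ)) L i j := by
  intro L
  induction L with
  | nil => intro i j; simp [FF, ent_one]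
  | cons k L ih =>
      intro i j
      rw [List.map_cons, List.prod_cons, ha k, ent_sUT_zpow_mul, FF, ih]
      rcases eq_or_ne i (u k).1 with rfl | hi
      · rw [if_pos rfl, if_pos rfl, ih]
      · rw [if_neg hi, if_neg hi]

end Main
end NickelAux
namespace NickelAux
section Main2
variable {m n : ℕ} (u : Fin n → Fin m × Fin m) (t : Fin n → ↥(UT m) → ℚ)

/-- `ks` is a path of generator indices from `i` to `j` -/
def Path : Fin m → Fin m → List (Fin n) → Prop
  | i, j, [] => i = j
  | i, j, k :: ks => (u k).1 = i ∧ Path (u k).2 j ks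

/-- pointwise product of coordinate functions along a list -/
def Tprod (ks : List (Fin n)) : ↥(UT m) → ℚ := fun h => (ks.map fun k => t k h).prod

lemma Tprod_nil : Tprod t [] = (1 : ↥(UT m) → ℚ) := by funext h; simp [Tprod]

lemma Tprod_cons (k : Fin n) (ks : List (Fin n)) :
    Tprod t (k :: ks) = t k * Tprod t ks := by funext h; simp [Tprod]

def U (i j : Fin m) : Submodule ℚ (↥(UT m) → ℚ) :=
  Submodule.span ℚ {f | ∃ ks, Path u i j ks ∧ f = Tprod t ks}

def U2 (i j : Fin m) : Submodule ℚ (↥(UT m) → ℚ) :=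
  Submodule.span ℚ {f | ∃ ks, Path u i j ks ∧ 2 ≤ ks.length ∧ f = Tprod t ks}

/-- multiplying a span into a module -/
lemma mul_span_mem {s : Set (↥(UT m) → ℚ)} {W : Submodule ℚ (↥(UT m) → ℚ)}
    (g : ↥(UT m) → ℚ) (hg : ∀ f ∈ s, g * f ∈ W) {f : ↥(UT m) → ℚ}
    (hf : f ∈ Submodule.span ℚ s) : g * f ∈ W := by
  have h1 : Submodule.span ℚ s ≤ W.comap (LinearMap.mulLeft ℚ g) :=
    Submodule.span_le.2 fun f hf => hg f hf
  exact h1 hf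

lemma claim0 : ∀ (L : List (Fin n)) (i j : Fin m),
    (fun h => FF u (fun k => t k h) L i j) ∈ U u t i j := by
  intro L
  induction L with
  | nil =>
      intro i j
      rcases eq_or_ne i j with rfl | hij
      · have : (fun h : ↥(UT m) => FF u (fun k => t k h) [] i i) = Tprod t [] := by
          funext h; simp [FF, Tprod]
        rw [this]
        exact Submodule.subset_span ⟨[], rfl, rfl⟩
      · have : (fun h : ↥(UT m) => FF u (fun k => t k h) [] i j) = 0 := by
          funext h; simp [FF, hij]
        rw [this]
        exact Submodule.zero_mem _
  | cons k L ih =>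
      intro i j
      rcases eq_or_ne i (u k).1 with rfl | hi
      · have : (fun h => FF u (fun k' => t k' h) (k :: L) (u k).1 j)
            = (fun h => FF u (fun k' => t k' h) L (u k).1 j)
              + t k * (fun h => FF u (fun k' => t k' h) L (u k).2 j) := by
          funext h; simp [FF]
        rw [this]
        refine Submodule.add_mem _ (ih _ _) ?_
        refine mul_span_mem (t k) ?_ (ih (u k).2 j)
        rintro f ⟨ks, hks, rfl⟩
        exact Submodule.subset_span ⟨k :: ks, ⟨rfl, hks⟩, (Tprod_cons t k ks).symm⟩
      · have : (fun h => FF u (fun k' => t k' h) (k :: L) i j)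
            = (fun h => FF u (fun k' => t k' h) L i j) := by
          funext h; simp [FF, hi]
        rw [this]
        exact ih i j

variable (hlt : ∀ k, (u k).1 < (u k).2) (hu : Function.Injective u)

include hlt hu in
lemma claimC (k : Fin n) : ∀ L : List (Fin n), L.Nodup →
    ((k ∈ L → ((fun h => FF u (fun k' => t k' h) L (u k).1 (u k).2) - t k)
        ∈ U2 u t (u k).1 (u k).2) ∧
     (k ∉ L → (fun h => FF u (fun k' => t k' h) L (u k).1 (u k).2)
        ∈ U2 u t (u k).1 (u k).2)) := by
  intro L
  induction L with
  | nil =>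
      intro _
      refine ⟨fun hk => absurd hk List.not_mem_nil, fun _ => ?_⟩
      have : (fun h : ↥(UT m) => FF u (fun k' => t k' h) [] (u k).1 (u k).2) = 0 := by
        funext h; simp [FF, ne_of_lt (hlt k)]
      rw [this]; exact Submodule.zero_mem _
  | cons l L ih =>
      intro hnd
      rw [List.nodup_cons] at hnd
      obtain ⟨hlL, hnd⟩ := hnd
      have IH := ih hnd
      rcases eq_or_ne l k with rfl | hlk
      · -- head is k
        have hdecomp : (fun h => FF u (fun k' => t k' h) (l :: L) (u l).1 (u l).2)
            = (fun h => FF u (fun k' => t k' h) L (u l).1 (u l).2) + t l := by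
          funext h
          show FF u (fun k' => t k' h) L (u l).1 (u l).2
              + (if (u l).1 = (u l).1 then
                  (fun k' => t k' h) l * FF u (fun k' => t k' h) L (u l).2 (u l).2 else 0)
            = FF u (fun k' => t k' h) L (u l).1 (u l).2 + t l h
          rw [if_pos rfl, FF_diag u hlt _ L, mul_one]
        constructor
        · intro _
          rw [hdecomp, add_sub_cancel_right]
          exact IH.2 hlL
        · intro hk
          exact absurd (List.mem_cons_self) hk
      · -- head is not k
        rcases eq_or_ne (u k).1 (u l).1 with hi | hi
        · -- the if-condition fires
          have hvj : (u l).2 ≠ (u k).2 := by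
            intro hvj
            exact hlk (hu (Prod.ext hi.symm hvj))
          have hsec : (fun h => t l h * FF u (fun k' => t k' h) L (u l).2 (u k).2)
              ∈ U2 u t (u k).1 (u k).2 := by
            have : (fun h => t l h * FF u (fun k' => t k' h) L (u l).2 (u k).2)
                = t l * (fun h => FF u (fun k' => t k' h) L (u l).2 (u k).2) := rfl
            rw [this]
            refine mul_span_mem (t l) ?_ (claim0 u t L (u l).2 (u k).2)
            rintro f ⟨ks, hks, rfl⟩
            refine Submodule.subset_span ⟨l :: ks, ⟨hi.symm, hks⟩, ?_, (Tprod_cons t l ks).symm⟩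
            have hne : ks ≠ [] := by
              intro h0
              subst h0
              exact hvj hks
            have : 1 ≤ ks.length := List.length_pos_iff.2 hne
            simpa using this
          have hdecomp : (fun h => FF u (fun k' => t k' h) (l :: L) (u k).1 (u k).2)
              = (fun h => FF u (fun k' => t k' h) L (u k).1 (u k).2)
                + (fun h => t l h * FF u (fun k' => t k' h) L (u l).2 (u k).2) := by
            funext h
            show FF u (fun k' => t k' h) L (u k).1 (u k).2
                + (if (u k).1 = (u l).1 then
                    (fun k' => t k' h) l * FF u (fun k' => t k' h) L (u l).2 (u k).2 else 0)
              = _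
            rw [if_pos hi]
            rfl
          constructor
          · intro hk
            have hkL : k ∈ L := by
              rcases List.mem_cons.1 hk with h | h
              · exact absurd h.symm hlk
              · exact h
            rw [hdecomp]
            have : (fun h => FF u (fun k' => t k' h) L (u k).1 (u k).2)
                + (fun h => t l h * FF u (fun k' => t k' h) L (u l).2 (u k).2) - t k
                = ((fun h => FF u (fun k' => t k' h) L (u k).1 (u k).2) - t k)
                  + (fun h => t l h * FF u (fun k' => t k' h) L (u l).2 (u k).2) := by
              abel
            rw [this]
            exact Submodule.add_mem _ (IH.1 hkL) hsec
          · intro hk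
            have hkL : k ∉ L := fun h => hk (List.mem_cons_of_mem l h)
            rw [hdecomp]
            exact Submodule.add_mem _ (IH.2 hkL) hsec
        · -- the if-condition does not fire
          have hdecomp : (fun h => FF u (fun k' => t k' h) (l :: L) (u k).1 (u k).2)
              = (fun h => FF u (fun k' => t k' h) L (u k).1 (u k).2) := by
            funext h
            show FF u (fun k' => t k' h) L (u k).1 (u k).2
                + (if (u k).1 = (u l).1 then _ else 0) = _
            rw [if_neg hi, add_zero]
          constructor
          · intro hk
            have hkL : k ∈ L := by
              rcases List.mem_cons.1 hk with h | h
              · exact absurd h.symm hlk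
              · exact h
            rw [hdecomp]
            exact IH.1 hkL
          · intro hk
            have hkL : k ∉ L := fun h => hk (List.mem_cons_of_mem l h)
            rw [hdecomp]
            exact IH.2 hkL

end Main2
end NickelAux
namespace NickelAux
section Main3
variable {m n : ℕ} (u : Fin n → Fin m × Fin m) (t : Fin n → ↥(UT m) → ℚ)
variable (hlt : ∀ k, (u k).1 < (u k).2)

include hlt in
lemma path_le : ∀ (ks : List (Fin n)) (w j : Fin m), Path u w j ks → w ≤ j := by
  intro ks
  induction ks with
  | nil => intro w j h; exact le_of_eq h
  | cons l ks ih =>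
      intro w j h
      obtain ⟨h1, h2⟩ := h
      exact le_of_lt (lt_of_lt_of_le (h1 ▸ hlt l) (ih _ _ h2))

include hlt in
lemma path_bounds : ∀ (ks : List (Fin n)) (w j : Fin m), Path u w j ks →
    ∀ l ∈ ks, w ≤ (u l).1 ∧ (u l).2 ≤ j := by
  intro ks
  induction ks with
  | nil => intro w j _ l hl; exact absurd hl List.not_mem_nil
  | cons l' ks ih =>
      intro w j h l hl
      obtain ⟨h1, h2⟩ := h
      rcases List.mem_cons.1 hl with rfl | hl
      · refine ⟨le_of_eq h1.symm, ?_⟩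
        rcases ks with _ | ⟨l2, ks⟩
        · exact le_of_eq h2
        · obtain ⟨e1, p2⟩ := h2
          have hx : (u l).2 < (u l2).2 := by rw [← e1]; exact hlt l2
          exact le_trans (le_of_lt hx) (path_le u hlt _ _ _ p2)
      · obtain ⟨hb1, hb2⟩ := ih _ _ h2 l hl
        have hx : w < (u l').2 := by rw [← h1]; exact hlt l'
        exact ⟨le_trans (le_of_lt hx) hb1, hb2⟩

include hlt in
lemma path_width : ∀ (ks : List (Fin n)) (i j : Fin m), Path u i j ks → 2 ≤ ks.length →
    ∀ l ∈ ks, ((u l).2 : ℕ) - ((u l).1 : ℕ) < ((j : ℕ) - (i : ℕ)) := by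
  rintro (_ | ⟨l1, (_ | ⟨l2, ks⟩)⟩) i j hp hlen l hl
  · simp at hlen
  · simp at hlen
  · obtain ⟨h1, h2⟩ := hp
    have htail := path_bounds u hlt _ _ _ h2
    have hl2 : (u l1).2 ≤ (u l2).1 := (htail l2 (List.mem_cons_self)).1
    have hj2 : (u l2).2 ≤ j := (htail l2 (List.mem_cons_self)).2
    have hlt1 := hlt l1
    have hlt2 := hlt l2
    rcases List.mem_cons.1 hl with rfl | hl'
    · -- l = l1
      have e1 : ((u l).1 : ℕ) = (i : ℕ) := congrArg Fin.val h1
      have : ((u l).2 : ℕ) < (j : ℕ) := by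
        have a1 : ((u l).2 : ℕ) ≤ ((u l2).1 : ℕ) := hl2
        have a2 : ((u l2).1 : ℕ) < ((u l2).2 : ℕ) := hlt2
        have a3 : ((u l2).2 : ℕ) ≤ (j : ℕ) := hj2
        omega
      have : ((u l).1 : ℕ) < ((u l).2 : ℕ) := hlt l
      omega
    · obtain ⟨hb1, hb2⟩ := htail l hl'
      have a0 : (i : ℕ) < ((u l1).2 : ℕ) := h1 ▸ hlt1
      have a1 : ((u l1).2 : ℕ) ≤ ((u l).1 : ℕ) := hb1
      have a2 : ((u l).1 : ℕ) < ((u l).2 : ℕ) := hlt l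
      have a3 : ((u l).2 : ℕ) ≤ (j : ℕ) := hb2
      omega

include hlt in
lemma tprod_mem_V : ∀ (ks : List (Fin n)) (v j : Fin m), v ≤ j → Path u v j ks →
    (∀ l ∈ ks, t l ∈ V (u l).1 (u l).2) → Tprod t ks ∈ V v j := by
  intro ks
  induction ks with
  | nil =>
      intro v j _ hp _
      rw [Tprod_nil]
      exact (hp : v = j) ▸ one_mem_V v j
  | cons l ks ih =>
      intro v j hvj hp hmem
      obtain ⟨h1, h2⟩ := hp
      rw [Tprod_cons]
      have hm1 : t l ∈ V v (u l).2 := by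
        have := hmem l (List.mem_cons_self)
        rwa [h1] at this
      have hm2 : Tprod t ks ∈ V (u l).2 j :=
        ih _ _ (path_le u hlt ks _ _ h2) h2 fun l' hl' => hmem l' (List.mem_cons_of_mem _ hl')
      exact V_mul_mem (le_of_lt (h1 ▸ hlt l)) (path_le u hlt ks _ _ h2) hm1 hm2

variable (hu : Function.Injective u) {a : Fin n → ↥(UT m)}
variable (ha : ∀ k, a k = sUT (u k).1 (u k).2 (hlt k))
variable (hbij : Function.Surjective (malcevProd a))
variable (ht' : ∀ (x : Fin n → ℤ) (k : Fin n), t k (malcevProd a x) = (x k : ℚ))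

include hlt ha hbij ht' in
lemma entFF (h : ↥(UT m)) (i j : Fin m) :
    ent h i j = FF u (fun k => t k h) (List.finRange n) i j := by
  obtain ⟨x, rfl⟩ := hbij h
  have e1 : malcevProd a x = ((List.finRange n).map fun k => a k ^ x k).prod := rfl
  have e2 : (fun k => t k (malcevProd a x)) = fun k => (x k : ℚ) := by
    funext k; exact ht' x k
  rw [e2, e1, ent_listProd u hlt ha]

include hlt hu ha hbij ht' in
lemma tk_mem_V (k : Fin n) : t k ∈ V (u k).1 (u k).2 := by
  suffices H : ∀ d : ℕ, ∀ k : Fin n, (((u k).2 : ℕ) - ((u k).1 : ℕ)) ≤ d →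
      t k ∈ V (u k).1 (u k).2 by
    exact H _ k le_rfl
  intro d
  induction d with
  | zero =>
      intro k hk
      have := hlt k
      have : ((u k).1 : ℕ) < ((u k).2 : ℕ) := this
      omega
  | succ d ih =>
      intro k hk
      have key := (claimC u t hlt hu k (List.finRange n) (List.nodup_finRange n)).1
        (List.mem_finRange k)
      have e : (fun h => FF u (fun k' => t k' h) (List.finRange n) (u k).1 (u k).2)
          = fun h => ent h (u k).1 (u k).2 := by
        funext h; exact (entFF u t hlt ha hbij ht' h _ _).symm
      rw [e] at key
      have hU2 : U2 u t (u k).1 (u k).2 ≤ V (u k).1 (u k).2 := by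
        apply Submodule.span_le.2
        rintro f ⟨ks, hp, hlen, rfl⟩
        refine tprod_mem_V u t hlt ks _ _ (le_of_lt (hlt k)) hp ?_
        intro l hl
        have hw := path_width u hlt ks _ _ hp hlen l hl
        exact ih l (by omega)
      have hent : (fun h => ent h (u k).1 (u k).2) ∈ V (u k).1 (u k).2 :=
        ent_mem_V le_rfl (hlt k) le_rfl
      have : t k = (fun h => ent h (u k).1 (u k).2)
          - ((fun h => ent h (u k).1 (u k).2) - t k) := by abel
      rw [this]
      exact Submodule.sub_mem _ hent (hU2 key)

end Main3
end NickelAux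
namespace NickelAux
section Main4
variable {m : ℕ}

lemma translate_chi (g : ↥(UT m)) : ∀ (c : List (Fin m × Fin m)) (b hi : Fin m),
    CIn b hi c → (fun h => chi c (h * g⁻¹)) ∈ V b hi := by
  intro c
  induction c with
  | nil =>
      intro b hi _
      have : (fun h : ↥(UT m) => chi [] (h * g⁻¹)) = 1 := by funext h; simp [chi]
      rw [this]; exact one_mem_V b hi
  | cons p c ih =>
      intro b hi hC
      obtain ⟨hb, huv, hvh, htail⟩ := hC
      have hdecomp : (fun h => chi (p :: c) (h * g⁻¹))
          = ∑ l : Fin m, (ent g⁻¹ l p.2) •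
              ((fun h => ent h p.1 l) * (fun h => chi c (h * g⁻¹))) := by
        funext h
        rw [Finset.sum_apply]
        have : chi (p :: c) (h * g⁻¹) = ent (h * g⁻¹) p.1 p.2 * chi c (h * g⁻¹) := by
          simp [chi]
        rw [this, ent_mul, Finset.sum_mul]
        apply Finset.sum_congr rfl
        intro l _
        simp [Pi.smul_apply, Pi.mul_apply]
        ring
      rw [hdecomp]
      apply Submodule.sum_mem
      intro l _
      rcases lt_trichotomy l p.1 with hl | rfl | hl
      · have : (fun h : ↥(UT m) => ent h p.1 l) = 0 := funext fun h => ent_lower h hl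
        rw [this, zero_mul, smul_zero]
        exact Submodule.zero_mem _
      · have : (fun h : ↥(UT m) => ent h p.1 p.1) = 1 := funext fun h => ent_diag h p.1
        rw [this, one_mul]
        refine Submodule.smul_mem _ _ ?_
        exact V_mono (le_trans hb (le_of_lt huv)) le_rfl (ih p.2 hi htail)
      · rcases le_or_gt l p.2 with hl2 | hl2
        · refine Submodule.smul_mem _ _ ?_
          have hin : (fun h => chi c (h * g⁻¹)) ∈ V l hi :=
            V_mono hl2 le_rfl (ih p.2 hi htail)
          refine mul_span_mem (fun h => ent h p.1 l) ?_ hin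
          rintro f ⟨c', hc', rfl⟩
          refine Submodule.subset_span ⟨(p.1, l) :: c', ⟨hb, hl, le_trans hl2 hvh, hc'⟩, ?_⟩
          rw [chi_cons]
        · have : ent g⁻¹ l p.2 = 0 := ent_lower _ hl2
          rw [this, zero_smul]
          exact Submodule.zero_mem _

/-- right translation as a linear map -/
def Tg (g : ↥(UT m)) : ((↥(UT m)) → ℚ) →ₗ[ℚ] ((↥(UT m)) → ℚ) where
  toFun := fun f h => f (h * g⁻¹)
  map_add' := fun _ _ => rfl
  map_smul' := fun _ _ => rfl

lemma Tg_mem_V (g : ↥(UT m)) {b hi : Fin m} {f : ↥(UT m) → ℚ}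
    (hf : f ∈ V b hi) : Tg g f ∈ V b hi := by
  have h1 : V b hi ≤ (V b hi).comap (Tg g) := by
    apply Submodule.span_le.2
    rintro f' ⟨c, hc, rfl⟩
    exact translate_chi g c b hi hc
  exact h1 hf

/- ===== counting chains ===== -/
def flat : List (Fin m × Fin m) → List (Fin m)
  | [] => []
  | p :: c => p.1 :: p.2 :: flat c

lemma flat_inj : ∀ c c' : List (Fin m × Fin m), flat c = flat c' → c = c' := by
  intro c
  induction c with
  | nil => intro c' h; cases c' with
      | nil => rfl
      | cons q c' => simp [flat] at h
  | cons p c ih =>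
      intro c' h
      cases c' with
      | nil => simp [flat] at h
      | cons q c' =>
          simp only [flat, List.cons.injEq] at h
          obtain ⟨h1, h2, h3⟩ := h
          rw [ih c' h3, Prod.ext h1 h2]

lemma flat_ge : ∀ (c : List (Fin m × Fin m)) (lo hi : Fin m), CIn lo hi c →
    ∀ x ∈ flat c, lo ≤ x := by
  intro c
  induction c with
  | nil => intro lo hi _ x hx; exact absurd hx List.not_mem_nil
  | cons p c ih =>
      intro lo hi hC x hx
      obtain ⟨hb, huv, hvh, htail⟩ := hC
      rcases List.mem_cons.1 hx with rfl | hx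
      · exact hb
      · rcases List.mem_cons.1 hx with rfl | hx
        · exact le_trans hb (le_of_lt huv)
        · exact le_trans (le_trans hb (le_of_lt huv)) (ih p.2 hi htail x hx)

lemma flat_sorted : ∀ (c : List (Fin m × Fin m)) (lo hi : Fin m), CIn lo hi c →
    (flat c).Pairwise (· ≤ ·) := by
  intro c
  induction c with
  | nil => intro _ _ _; exact List.Pairwise.nil
  | cons p c ih =>
      intro lo hi hC
      obtain ⟨hb, huv, hvh, htail⟩ := hC
      have hge := flat_ge c p.2 hi htail
      refine List.pairwise_cons.2 ⟨?_, List.pairwise_cons.2 ⟨fun x hx => hge x hx, ih p.2 hi htail⟩⟩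
      intro x hx
      rcases List.mem_cons.1 hx with rfl | hx
      · exact le_of_lt huv
      · exact le_trans (le_of_lt huv) (hge x hx)

lemma flat_count : ∀ (c : List (Fin m × Fin m)) (lo hi : Fin m), CIn lo hi c → ∀ x : Fin m,
    ((flat c).count x ≤ 2 ∧ (x ≤ lo → (flat c).count x ≤ 1) ∧ (x < lo → (flat c).count x = 0)) := by
  intro c
  induction c with
  | nil => intro lo hi _ x; simp [flat]
  | cons p c ih =>
      intro lo hi hC x
      obtain ⟨hb, huv, hvh, htail⟩ := hC
      obtain ⟨I1, I2, I3⟩ := ih p.2 hi htail x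
      have hcc : (flat (p :: c)).count x
          = ((if p.1 = x then 1 else 0) + (if p.2 = x then 1 else 0)) + (flat c).count x := by
        simp [flat, List.count_cons]
        ring
      have hlp : lo < p.2 := lt_of_le_of_lt hb huv
      rcases lt_trichotomy x p.2 with h2 | h2 | h2
      · have e2 : (if p.2 = x then 1 else 0) = 0 := by
          rw [if_neg]; exact fun h => absurd h.symm (ne_of_lt h2)
        have e3 : (flat c).count x = 0 := I3 h2
        refine ⟨?_, fun _ => ?_, fun hxlo => ?_⟩
        · rw [hcc, e2, e3]; split <;> omega
        · rw [hcc, e2, e3]; split <;> omega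
        · have e1 : (if p.1 = x then 1 else 0) = 0 := by
            rw [if_neg]
            intro h
            rw [h] at hb
            exact absurd hxlo (not_lt.2 hb)
          rw [hcc, e1, e2, e3]
      · have e1 : (if p.1 = x then 1 else 0) = 0 := by
          rw [if_neg]; rw [← h2] at huv; exact fun h => absurd h (ne_of_lt huv)
        have h2' : (flat c).count x ≤ 1 := I2 (le_of_eq h2)
        refine ⟨?_, fun hxlo => ?_, fun hxlo => ?_⟩
        · rw [hcc, e1]; split <;> omega
        · rw [h2] at hxlo
          exact absurd (lt_of_lt_of_le hlp hxlo) (lt_irrefl lo)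
        · rw [h2] at hxlo
          exact absurd (lt_trans hlp hxlo) (lt_irrefl lo)
      · have e1 : (if p.1 = x then 1 else 0) = 0 := by
          rw [if_neg]; exact ne_of_lt (lt_trans huv h2)
        have e2 : (if p.2 = x then 1 else 0) = 0 := by
          rw [if_neg]; exact ne_of_lt h2
        refine ⟨?_, fun hxlo => ?_, fun hxlo => ?_⟩
        · rw [hcc, e1, e2]; omega
        · exact absurd (lt_of_lt_of_le (lt_trans hlp h2) hxlo) (lt_irrefl lo)
        · exact absurd (lt_trans (lt_trans hlp h2) hxlo) (lt_irrefl lo)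

end Main4
end NickelAux

namespace NickelAux
variable {m : ℕ}

lemma card_chains (lo hi : Fin m) :
    Cardinal.mk {c : List (Fin m × Fin m) // CIn lo hi c} ≤ Cardinal.mk (Fin m → Fin 3) := by
  have hF : ∀ c : {c : List (Fin m × Fin m) // CIn lo hi c}, ∀ x : Fin m,
      (flat c.1).count x < 3 := by
    intro c x
    have := (flat_count c.1 lo hi c.2 x).1
    omega
  apply Cardinal.mk_le_of_injective (f := fun c x => (⟨(flat c.1).count x, hF c x⟩ : Fin 3))
  intro c1 c2 h
  have hcnt : ∀ x, (flat c1.1).count x = (flat c2.1).count x := by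
    intro x
    have := congrFun h x
    exact congrArg Fin.val this
  have hperm : (flat c1.1).Perm (flat c2.1) := List.perm_iff_count.2 hcnt
  have heq : flat c1.1 = flat c2.1 :=
    List.Perm.eq_of_pairwise' (flat_sorted c1.1 lo hi c1.2) (flat_sorted c2.1 lo hi c2.2) hperm
  exact Subtype.ext (flat_inj _ _ heq)

end NickelAux


open NickelAux in
theorem nickel_upper_bound_UT (m : ℕ) (hm : 2 ≤ m)
    (n : ℕ) (hn : n = m * (m - 1) / 2)
    (a : Fin n → ↥(UT m))
    (hinj : Function.Injective a)
    (hran : ∀ k : Fin n, ∃ p : Pears m, a k = sUT p.1.1 p.1.2 p.2)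
    (hsurj : ∀ p : Pears m, ∃ k : Fin n, a k = sUT p.1.1 p.1.2 p.2)
    (hmal : IsMalcevBasis a)
    (t : Fin n → ↥(UT m) → ℚ)
    (ht : ∀ (x : Fin n → ℤ) (k : Fin n), t k (malcevProd a x) = (x k : ℚ)) :
    Module.rank ℚ ↥(Submodule.span ℚ
      {f : ↥(UT m) → ℚ | ∃ (g : ↥(UT m)) (k : Fin n), f = fun h => t k (h * g⁻¹)}) ≤ (3 : Cardinal) ^ m := by
  classical
  set lo : Fin m := ⟨0, by omega⟩ with hlo
  set hi : Fin m := ⟨m - 1, by omega⟩ with hhi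
  set P : Fin n → Pears m := fun k => (hran k).choose with hP
  set u : Fin n → Fin m × Fin m := fun k => (P k).1 with hu'
  have hlt : ∀ k, (u k).1 < (u k).2 := fun k => (P k).2
  have ha : ∀ k, a k = sUT (u k).1 (u k).2 (hlt k) := fun k => (hran k).choose_spec
  have hu : Function.Injective u := by
    intro k k' h
    have hPP : P k = P k' := Subtype.ext h
    apply hinj
    rw [ha k, ha k']
    exact congrArg (fun p : Pears m => sUT p.1.1 p.1.2 p.2) hPP
  have hbij : Function.Surjective (malcevProd a) := hmal.1.2
  have htk : ∀ k, t k ∈ V (u k).1 (u k).2 :=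
    fun k => tk_mem_V u t hlt hu ha hbij ht k
  have hS : {f : ↥(UT m) → ℚ | ∃ (g : ↥(UT m)) (k : Fin n), f = fun h => t k (h * g⁻¹)}
      ⊆ (V lo hi : Set (↥(UT m) → ℚ)) := by
    rintro f ⟨g, k, rfl⟩
    have hmem : t k ∈ V lo hi := by
      refine V_mono ?_ ?_ (htk k)
      · exact Fin.mk_le_of_le_val (by omega)
      · have := ((u k).2).isLt
        exact Fin.le_def.2 (by simp [hhi]; omega)
    exact Tg_mem_V g hmem
  have hspan : Submodule.span ℚ
      {f : ↥(UT m) → ℚ | ∃ (g : ↥(UT m)) (k : Fin n), f = fun h => t k (h * g⁻¹)} ≤ V lo hi :=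
    Submodule.span_le.2 hS
  have h1 := Submodule.rank_mono (R := ℚ) hspan
  have h2 : Module.rank ℚ ↥(V lo hi)
      ≤ Cardinal.mk {f : ↥(UT m) → ℚ | ∃ c, CIn lo hi c ∧ f = chi c} :=
    rank_span_le _
  have hset : {f : ↥(UT m) → ℚ | ∃ c, CIn lo hi c ∧ f = chi c}
      = chi '' {c | CIn lo hi c} := by
    ext f
    constructor
    · rintro ⟨c, hc, rfl⟩; exact ⟨c, hc, rfl⟩
    · rintro ⟨c, hc, rfl⟩; exact ⟨c, hc, rfl⟩
  have h3 : Cardinal.mk {f : ↥(UT m) → ℚ | ∃ c, CIn lo hi c ∧ f = chi c}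
      ≤ Cardinal.mk {c : List (Fin m × Fin m) | CIn lo hi c} := by
    rw [hset]; exact Cardinal.mk_image_le
  have h4 : Cardinal.mk {c : List (Fin m × Fin m) | CIn lo hi c}
      ≤ Cardinal.mk (Fin m → Fin 3) := card_chains lo hi
  have h5 : Cardinal.mk (Fin m → Fin 3) = (3 : Cardinal) ^ m := by
    rw [Cardinal.mk_fintype, Fintype.card_fun, Fintype.card_fin, Fintype.card_fin]
    push_cast
    rfl
  calc Module.rank ℚ _ ≤ _ := h1
    _ ≤ _ := h2
    _ ≤ _ := h3
    _ ≤ _ := h4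
    _ = _ := h5
end

section
/- Let m ≥ 1 and let H be the (2m+1)-dimensional integral Heisenberg group with its Mal'cev basis (a_1, …, a_{2m+1}). Then the Nickel module of H, i.e., the ℚ-linear span of {g • t_k : g ∈ H, 1 ≤ k ≤ 2m+1} of the coordinate functions, has ℚ-dimension exactly 2m+2; a ℚ-basis is given by (t_1, …, t_{2m+1}, 1). -/
open scoped TensorProduct
open scoped commutatorElement

/-- The generators of the `(2m+1)`-dimensional integral Heisenberg group inside
`UT (m+2)`. -/
def heisGen (m : ℕ) : Fin (2 * m + 1) → ↥(UT (m + 2)) := fun k =>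
  if h : (k : ℕ) < m then
    sUT ⟨0, by omega⟩ ⟨(k : ℕ) + 1, by omega⟩ (Fin.mk_lt_mk.mpr (by omega))
  else if h2 : (k : ℕ) < 2 * m then
    sUT ⟨(k : ℕ) - m + 1, by omega⟩ ⟨m + 1, by omega⟩ (Fin.mk_lt_mk.mpr (by omega))
  else
    sUT ⟨0, by omega⟩ ⟨m + 1, by omega⟩ (Fin.mk_lt_mk.mpr (by omega))

/-- The `(2m+1)`-dimensional integral Heisenberg group. -/
def Heis (m : ℕ) : Subgroup ↥(UT (m + 2)) := Subgroup.closure (Set.range (heisGen m))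

/-- The Mal'cev basis `(a_1, …, a_{2m+1})` of the Heisenberg group. -/
def heisBasis (m : ℕ) : Fin (2 * m + 1) → ↥(Heis m) := fun k =>
  ⟨heisGen m k, Subgroup.subset_closure ⟨k, rfl⟩⟩

section NickelAux

open Matrix

private lemma finRange_add (a b : ℕ) : List.finRange (a+b) =
    (List.finRange a).map (Fin.castAdd b) ++ (List.finRange b).map (Fin.natAdd a) := by
  apply List.ext_getElem
  · simp
  · intro i h1 h2
    simp only [List.getElem_append, List.length_map, List.length_finRange, List.getElem_map,
      List.getElem_finRange]
    split <;> (ext; simp [Fin.castAdd, Fin.natAdd])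
    omega

private lemma malcevProd_split {G : Type*} [Group G] {p q n : ℕ} (hn : n = p + q)
    (a : Fin n → G) (x : Fin n → ℤ) :
    malcevProd a x =
      malcevProd (fun i : Fin p => a (Fin.cast hn.symm (Fin.castAdd q i)))
        (fun i => x (Fin.cast hn.symm (Fin.castAdd q i))) *
      malcevProd (fun i : Fin q => a (Fin.cast hn.symm (Fin.natAdd p i)))
        (fun i => x (Fin.cast hn.symm (Fin.natAdd p i))) := by
  subst hn
  rw [malcevProd, finRange_add, List.map_append, List.prod_append]
  simp only [malcevProd, List.map_map]
  rfl

private lemma malcevProd_one {G : Type*} [Group G] (a : Fin 1 → G) (x : Fin 1 → ℤ) :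
    malcevProd a x = a 0 ^ x 0 := by
  simp [malcevProd, List.finRange]

private lemma mul_list_sum_zero {R : Type*} [Ring R] (a : R) (l : List R)
    (h : ∀ b ∈ l, a * b = 0) : a * l.sum = 0 := by
  induction l with
  | nil => simp
  | cons b t ih =>
    simp only [List.sum_cons, mul_add, h b (by simp)]
    rw [ih fun c hc => h c (by simp [hc])]
    simp

private lemma list_prod_one_add {R : Type*} [Ring R] (l : List R)
    (h : ∀ a ∈ l, ∀ b ∈ l, a * b = 0) : (l.map (fun a => 1 + a)).prod = 1 + l.sum := by
  induction l with
  | nil => simp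
  | cons a t ih =>
    simp only [List.map_cons, List.prod_cons, List.sum_cons]
    rw [ih fun b hb c hc => h b (by simp [hb]) c (by simp [hc])]
    have hz : a * t.sum = 0 := mul_list_sum_zero a t fun b hb => h a (by simp) b (by simp [hb])
    rw [add_mul, one_mul, mul_add, mul_one, hz]
    abel

variable (m : ℕ)

private def z0 : Fin (m+2) := ⟨0, by omega⟩
private def zl : Fin (m+2) := ⟨m+1, by omega⟩
private def im0 (i : Fin m) : Fin (m+2) := ⟨(i:ℕ)+1, by omega⟩
private def idxA (i : Fin m) : Fin (2*m+1) := ⟨(i:ℕ), by omega⟩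
private def idxB (i : Fin m) : Fin (2*m+1) := ⟨m+(i:ℕ), by omega⟩
private def idxC : Fin (2*m+1) := ⟨2*m, by omega⟩

private lemma im0_ne_z0 (i : Fin m) : im0 m i ≠ z0 m := by
  simp [im0, z0, Fin.ext_iff]

private lemma zl_ne_z0 : zl m ≠ z0 m := by
  simp [zl, z0, Fin.ext_iff]

private lemma zl_ne_im0 (i : Fin m) : zl m ≠ im0 m i := by
  have := i.isLt
  simp [zl, im0, Fin.ext_iff]
  omega

private lemma im0_ne_im0 {i j : Fin m} (h : i ≠ j) : im0 m i ≠ im0 m j := by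
  simp [im0, Fin.ext_iff]
  exact fun hc => h (Fin.ext hc)

private lemma stdBasis_sum {ι : Type*} (s : Finset ι) (i j : Fin (m+2)) (f : ι → ℤ) :
    ∑ k ∈ s, Matrix.single i j (f k) = Matrix.single i j (∑ k ∈ s, f k) := by
  classical
  induction s using Finset.induction_on with
  | empty => simp
  | insert _ _ hns ih =>
    rw [Finset.sum_insert hns, Finset.sum_insert hns, ih, Matrix.single_add]

private def rowM (x : Fin (2*m+1) → ℤ) : Matrix (Fin (m+2)) (Fin (m+2)) ℤ :=
  ∑ i : Fin m, Matrix.single (z0 m) (im0 m i) (x (idxA m i))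

private def colM (x : Fin (2*m+1) → ℤ) : Matrix (Fin (m+2)) (Fin (m+2)) ℤ :=
  ∑ i : Fin m, Matrix.single (im0 m i) (zl m) (x (idxB m i))

private def corC (x : Fin (2*m+1) → ℤ) : ℤ :=
  x (idxC m) + ∑ i : Fin m, x (idxA m i) * x (idxB m i)

private def matOf (x : Fin (2*m+1) → ℤ) : Matrix (Fin (m+2)) (Fin (m+2)) ℤ :=
  1 + rowM m x + colM m x + Matrix.single (z0 m) (zl m) (corC m x)

private lemma rowM_mul_rowM (x y : Fin (2*m+1) → ℤ) : rowM m x * rowM m y = 0 := by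
  simp only [rowM]
  rw [Finset.sum_mul_sum]
  exact Finset.sum_eq_zero fun i _ => Finset.sum_eq_zero fun j _ =>
    Matrix.single_mul_single_of_ne _ _ _ _ (im0_ne_z0 m i) _

private lemma colM_mul_colM (x y : Fin (2*m+1) → ℤ) : colM m x * colM m y = 0 := by
  simp only [colM]
  rw [Finset.sum_mul_sum]
  exact Finset.sum_eq_zero fun i _ => Finset.sum_eq_zero fun j _ =>
    Matrix.single_mul_single_of_ne _ _ _ _ (zl_ne_im0 m j) _

private lemma colM_mul_rowM (x y : Fin (2*m+1) → ℤ) : colM m x * rowM m y = 0 := by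
  simp only [colM, rowM]
  rw [Finset.sum_mul_sum]
  exact Finset.sum_eq_zero fun i _ => Finset.sum_eq_zero fun j _ =>
    Matrix.single_mul_single_of_ne _ _ _ _ (zl_ne_z0 m) _

private lemma rowM_mul_colM (x y : Fin (2*m+1) → ℤ) :
    rowM m x * colM m y =
      Matrix.single (z0 m) (zl m) (∑ i : Fin m, x (idxA m i) * y (idxB m i)) := by
  simp only [rowM, colM]
  rw [Finset.sum_mul_sum, ← stdBasis_sum]
  refine Finset.sum_congr rfl fun i _ => ?_
  rw [Finset.sum_eq_single i]
  · exact Matrix.single_mul_single_same _ _ _ _ _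
  · intro j _ hji
    exact Matrix.single_mul_single_of_ne _ _ _ _ (im0_ne_im0 m (Ne.symm hji)) _
  · intro h; exact absurd (Finset.mem_univ i) h

private lemma rowM_mul_cor (x : Fin (2*m+1) → ℤ) (c : ℤ) :
    rowM m x * Matrix.single (z0 m) (zl m) c = 0 := by
  rw [rowM, Finset.sum_mul]
  exact Finset.sum_eq_zero fun i _ =>
    Matrix.single_mul_single_of_ne _ _ _ _ (im0_ne_z0 m i) _

private lemma colM_mul_cor (x : Fin (2*m+1) → ℤ) (c : ℤ) :
    colM m x * Matrix.single (z0 m) (zl m) c = 0 := by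
  rw [colM, Finset.sum_mul]
  exact Finset.sum_eq_zero fun i _ =>
    Matrix.single_mul_single_of_ne _ _ _ _ (zl_ne_z0 m) _

private lemma cor_mul_rowM (c : ℤ) (y : Fin (2*m+1) → ℤ) :
    Matrix.single (z0 m) (zl m) c * rowM m y = 0 := by
  rw [rowM, Finset.mul_sum]
  exact Finset.sum_eq_zero fun i _ =>
    Matrix.single_mul_single_of_ne _ _ _ _ (zl_ne_z0 m) _

private lemma cor_mul_colM (c : ℤ) (y : Fin (2*m+1) → ℤ) :
    Matrix.single (z0 m) (zl m) c * colM m y = 0 := by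
  rw [colM, Finset.mul_sum]
  exact Finset.sum_eq_zero fun i _ =>
    Matrix.single_mul_single_of_ne _ _ _ _ (zl_ne_im0 m i) _

private lemma cor_mul_cor (c d : ℤ) :
    Matrix.single (z0 m) (zl m) c * Matrix.single (z0 m) (zl m) d = 0 :=
  Matrix.single_mul_single_of_ne _ _ _ _ (zl_ne_z0 m) _

/-- composition law in Mal'cev coordinates -/
private def zc (x y : Fin (2*m+1) → ℤ) : Fin (2*m+1) → ℤ := fun k =>
  if (k:ℕ) < 2*m then x k + y k
  else x k + y k - ∑ i : Fin m, y (idxA m i) * x (idxB m i)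

private lemma zc_idxA (x y : Fin (2*m+1) → ℤ) (i : Fin m) :
    zc m x y (idxA m i) = x (idxA m i) + y (idxA m i) := by
  have := i.isLt
  rw [zc, if_pos (by simp [idxA]; omega)]

private lemma zc_idxB (x y : Fin (2*m+1) → ℤ) (i : Fin m) :
    zc m x y (idxB m i) = x (idxB m i) + y (idxB m i) := by
  have := i.isLt
  rw [zc, if_pos (by simp [idxB]; omega)]

private lemma zc_idxC (x y : Fin (2*m+1) → ℤ) :
    zc m x y (idxC m) = x (idxC m) + y (idxC m)
      - ∑ i : Fin m, y (idxA m i) * x (idxB m i) := by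
  rw [zc, if_neg (by simp [idxC])]

private lemma matOf_mul (x y : Fin (2*m+1) → ℤ) :
    matOf m x * matOf m y = matOf m (zc m x y) := by
  have hrow : rowM m (zc m x y) = rowM m x + rowM m y := by
    simp only [rowM]
    rw [← Finset.sum_add_distrib]
    exact Finset.sum_congr rfl fun i _ => by
      rw [zc_idxA, Matrix.single_add]
  have hcol : colM m (zc m x y) = colM m x + colM m y := by
    simp only [colM]
    rw [← Finset.sum_add_distrib]
    exact Finset.sum_congr rfl fun i _ => by
      rw [zc_idxB, Matrix.single_add]
  have hcor : corC m (zc m x y) =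
      corC m x + corC m y + ∑ i : Fin m, x (idxA m i) * y (idxB m i) := by
    simp only [corC]
    rw [zc_idxC]
    have : ∀ i : Fin m, zc m x y (idxA m i) * zc m x y (idxB m i) =
        x (idxA m i) * x (idxB m i) + y (idxA m i) * y (idxB m i)
          + x (idxA m i) * y (idxB m i) + y (idxA m i) * x (idxB m i) := by
      intro i; rw [zc_idxA, zc_idxB]; ring
    rw [Finset.sum_congr rfl fun i _ => this i]
    simp only [Finset.sum_add_distrib]
    ring
  simp only [matOf]
  rw [hrow, hcol, hcor]
  simp only [mul_add, add_mul, one_mul, mul_one, rowM_mul_rowM, rowM_mul_colM,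
    colM_mul_rowM, colM_mul_colM, rowM_mul_cor, colM_mul_cor, cor_mul_rowM,
    cor_mul_colM, cor_mul_cor, add_zero, zero_add, Matrix.single_add]
  abel

private def toMat : ↥(Heis m) →* Matrix (Fin (m+2)) (Fin (m+2)) ℤ :=
  (Units.coeHom _).comp (((UT (m+2)).subtype).comp (Heis m).subtype)

private lemma toMat_injective : Function.Injective (toMat m) := by
  intro a b h
  exact Subtype.ext (Subtype.ext (Units.ext h))

private lemma sUT_zpow {M : ℕ} (i j : Fin M) (hij : i < j) (n : ℤ) :
    (((sUT i j hij).val : (Matrix (Fin M) (Fin M) ℤ)ˣ) ^ n).val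
      = Matrix.transvection i j (n : ℤ) := by
  induction n using Int.induction_on with
  | zero =>
    rw [zpow_zero, Units.val_one]
    simp [Matrix.transvection]
  | succ k ih =>
    rw [_root_.zpow_add_one, Units.val_mul, ih]
    have hv : (sUT i j hij).val.val = Matrix.transvection i j 1 := rfl
    rw [hv, Matrix.transvection_mul_transvection_same _ _ hij.ne]
  | pred k ih =>
    rw [_root_.zpow_sub_one, Units.val_mul, ih]
    have hv : ((sUT i j hij).val⁻¹).val = Matrix.transvection i j (-1) := rfl
    rw [hv, Matrix.transvection_mul_transvection_same _ _ hij.ne]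
    norm_cast

private lemma sUT_congr {M : ℕ} {i j i' j' : Fin M} (h : i < j) (h' : i' < j')
    (hi : i = i') (hj : j = j') : sUT i j h = sUT i' j' h' := by
  subst hi; subst hj; rfl

private lemma z0_lt_zl : z0 m < zl m := by
  rw [Fin.lt_def]; exact Nat.succ_pos m

private lemma z0_lt_im0 (i : Fin m) : z0 m < im0 m i := by
  rw [Fin.lt_def]; exact Nat.succ_pos _

private lemma im0_lt_zl (i : Fin m) : im0 m i < zl m := by
  rw [Fin.lt_def]; show (i:ℕ)+1 < m+1; have := i.isLt; omega

private lemma toMat_zpow (k : Fin (2*m+1)) (n : ℤ) :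
    toMat m (heisBasis m k ^ n) = (((heisGen m k).val) ^ n).val := by
  have h0 : toMat m (heisBasis m k ^ n)
      = (((Heis m).subtype (heisBasis m k ^ n)).val : (Matrix (Fin (m+2)) (Fin (m+2)) ℤ)ˣ).val :=
    rfl
  rw [h0, map_zpow]
  rw [show (Heis m).subtype (heisBasis m k) = heisGen m k from rfl]
  rw [SubgroupClass.coe_zpow]

private lemma heisGen_idxA (i : Fin m) :
    heisGen m (idxA m i) = sUT (z0 m) (im0 m i) (z0_lt_im0 m i) := by
  rw [heisGen, dif_pos (show ((idxA m i : ℕ)) < m from i.isLt)]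
  exact sUT_congr _ _ (by ext; simp [z0]) (by ext; simp [im0, idxA])

private lemma heisGen_idxB (i : Fin m) :
    heisGen m (idxB m i) = sUT (im0 m i) (zl m) (im0_lt_zl m i) := by
  have h1 : ¬ ((idxB m i : ℕ) < m) := by simp only [idxB]; omega
  have h2 : ((idxB m i : ℕ)) < 2*m := by have := i.isLt; simp only [idxB]; omega
  rw [heisGen, dif_neg h1, dif_pos h2]
  exact sUT_congr _ _ (by ext; simp only [im0, idxB]; omega) (by ext; simp only [zl])

private lemma heisGen_idxC :
    heisGen m (idxC m) = sUT (z0 m) (zl m) (z0_lt_zl m) := by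
  have h1 : ¬ ((idxC m : ℕ) < m) := by simp only [idxC]; omega
  have h2 : ¬ ((idxC m : ℕ) < 2*m) := by simp only [idxC]; omega
  rw [heisGen, dif_neg h1, dif_neg h2]
  exact sUT_congr _ _ (by ext; simp [z0]) (by ext; simp [zl])

private lemma toMat_zpow_A (i : Fin m) (n : ℤ) :
    toMat m (heisBasis m (idxA m i) ^ n)
      = 1 + Matrix.single (z0 m) (im0 m i) n := by
  rw [toMat_zpow, heisGen_idxA, sUT_zpow, Matrix.transvection]

private lemma toMat_zpow_B (i : Fin m) (n : ℤ) :
    toMat m (heisBasis m (idxB m i) ^ n)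
      = 1 + Matrix.single (im0 m i) (zl m) n := by
  rw [toMat_zpow, heisGen_idxB, sUT_zpow, Matrix.transvection]

private lemma toMat_zpow_C (n : ℤ) :
    toMat m (heisBasis m (idxC m) ^ n)
      = 1 + Matrix.single (z0 m) (zl m) n := by
  rw [toMat_zpow, heisGen_idxC, sUT_zpow, Matrix.transvection]

private lemma toMat_malcevProd (x : Fin (2*m+1) → ℤ) :
    toMat m (malcevProd (heisBasis m) x) = matOf m x := by
  have hn1 : 2*m+1 = m + (m+1) := by omega
  rw [malcevProd_split hn1 (heisBasis m) x,
    malcevProd_split (show m+1 = m+1 from rfl)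
      (fun i : Fin (m+1) => heisBasis m (Fin.cast hn1.symm (Fin.natAdd m i)))
      (fun i : Fin (m+1) => x (Fin.cast hn1.symm (Fin.natAdd m i))),
    malcevProd_one]
  have hA : ∀ i : Fin m, (Fin.cast hn1.symm (Fin.castAdd (m+1) i)) = idxA m i := by
    intro i; ext; simp [idxA]
  have hB : ∀ i : Fin m,
      (Fin.cast hn1.symm (Fin.natAdd m (Fin.cast rfl (Fin.castAdd 1 i)))) = idxB m i := by
    intro i; ext; simp [idxB]
  have hC : (Fin.cast hn1.symm (Fin.natAdd m (Fin.cast rfl (Fin.natAdd m (0 : Fin 1)))))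
      = idxC m := by
    ext; simp [idxC]; omega
  rw [_root_.map_mul, _root_.map_mul]
  -- first chunk
  have e1 : toMat m (malcevProd
        (fun i : Fin m => heisBasis m (Fin.cast hn1.symm (Fin.castAdd (m+1) i)))
        (fun i => x (Fin.cast hn1.symm (Fin.castAdd (m+1) i)))) = 1 + rowM m x := by
    rw [malcevProd, map_list_prod, List.map_map]
    have : ((List.finRange m).map
        (⇑(toMat m) ∘ fun i => heisBasis m (Fin.cast hn1.symm (Fin.castAdd (m+1) i))
          ^ x (Fin.cast hn1.symm (Fin.castAdd (m+1) i))))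
        = ((List.finRange m).map
            (fun i => Matrix.single (z0 m) (im0 m i) (x (idxA m i)))).map
          (fun a => 1 + a) := by
      rw [List.map_map]
      refine List.map_congr_left fun i _ => ?_
      simp only [Function.comp]
      rw [hA i, toMat_zpow_A]
    rw [this, list_prod_one_add]
    · rw [← Fin.sum_univ_def (fun i => Matrix.single (z0 m) (im0 m i) (x (idxA m i)))]
      rfl
    · intro a ha b hb
      obtain ⟨i, -, rfl⟩ := List.mem_map.mp ha
      obtain ⟨j, -, rfl⟩ := List.mem_map.mp hb
      exact Matrix.single_mul_single_of_ne _ _ _ _ (im0_ne_z0 m i) _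
  have e2 : toMat m (malcevProd
        (fun i : Fin m => heisBasis m
          (Fin.cast hn1.symm (Fin.natAdd m (Fin.cast rfl (Fin.castAdd 1 i)))))
        (fun i => x (Fin.cast hn1.symm (Fin.natAdd m (Fin.cast rfl (Fin.castAdd 1 i))))))
      = 1 + colM m x := by
    rw [malcevProd, map_list_prod, List.map_map]
    have : ((List.finRange m).map
        (⇑(toMat m) ∘ fun i => heisBasis m
            (Fin.cast hn1.symm (Fin.natAdd m (Fin.cast rfl (Fin.castAdd 1 i))))
          ^ x (Fin.cast hn1.symm (Fin.natAdd m (Fin.cast rfl (Fin.castAdd 1 i))))))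
        = ((List.finRange m).map
            (fun i => Matrix.single (im0 m i) (zl m) (x (idxB m i)))).map
          (fun a => 1 + a) := by
      rw [List.map_map]
      refine List.map_congr_left fun i _ => ?_
      simp only [Function.comp]
      rw [hB i, toMat_zpow_B]
    rw [this, list_prod_one_add]
    · rw [← Fin.sum_univ_def (fun i => Matrix.single (im0 m i) (zl m) (x (idxB m i)))]
      rfl
    · intro a ha b hb
      obtain ⟨i, -, rfl⟩ := List.mem_map.mp ha
      obtain ⟨j, -, rfl⟩ := List.mem_map.mp hb
      exact Matrix.single_mul_single_of_ne _ _ _ _ (zl_ne_im0 m j) _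
  have e3 : toMat m (heisBasis m
        (Fin.cast hn1.symm (Fin.natAdd m (Fin.cast rfl (Fin.natAdd m (0 : Fin 1)))))
      ^ x (Fin.cast hn1.symm (Fin.natAdd m (Fin.cast rfl (Fin.natAdd m (0 : Fin 1))))))
      = 1 + Matrix.single (z0 m) (zl m) (x (idxC m)) := by
    rw [hC, toMat_zpow_C]
  rw [e1, e2, e3]
  simp only [mul_add, add_mul, one_mul, mul_one, ← mul_assoc, rowM_mul_colM,
    rowM_mul_cor, colM_mul_cor, cor_mul_cor, add_zero, zero_add]
  rw [matOf, corC, Matrix.single_add]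
  abel

private lemma malcev_comp (x y : Fin (2*m+1) → ℤ) :
    malcevProd (heisBasis m) x * malcevProd (heisBasis m) y
      = malcevProd (heisBasis m) (zc m x y) := by
  apply toMat_injective m
  rw [_root_.map_mul, toMat_malcevProd, toMat_malcevProd, toMat_malcevProd, matOf_mul]

end NickelAux
set_option maxHeartbeats 1000000
set_option synthInstance.maxHeartbeats 400000

theorem nickel_heisenberg (m : ℕ) (hm : 1 ≤ m)
    (hmal : IsMalcevBasis (heisBasis m))
    (t : Fin (2 * m + 1) → ↥(Heis m) → ℚ)
    (ht : ∀ (x : Fin (2 * m + 1) → ℤ) (k : Fin (2 * m + 1)),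
      t k (malcevProd (heisBasis m) x) = (x k : ℚ)) :
    Submodule.span ℚ
        {f : ↥(Heis m) → ℚ | ∃ (g : ↥(Heis m)) (k : Fin (2 * m + 1)),
          f = fun h => t k (h * g⁻¹)} =
      Submodule.span ℚ (Set.range fun k : Fin (2 * m + 2) =>
        if h : (k : ℕ) < 2 * m + 1 then t ⟨(k : ℕ), h⟩ else fun _ => (1 : ℚ)) ∧
    LinearIndependent ℚ (fun k : Fin (2 * m + 2) =>
        if h : (k : ℕ) < 2 * m + 1 then t ⟨(k : ℕ), h⟩ else fun _ => (1 : ℚ)) ∧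
    Module.finrank ℚ ↥(Submodule.span ℚ
        {f : ↥(Heis m) → ℚ | ∃ (g : ↥(Heis m)) (k : Fin (2 * m + 1)),
          f = fun h => t k (h * g⁻¹)}) = 2 * m + 2 := by
  classical
  set b : Fin (2 * m + 2) → (↥(Heis m) → ℚ) := fun k =>
    if h : (k : ℕ) < 2 * m + 1 then t ⟨(k : ℕ), h⟩ else fun _ => (1 : ℚ) with hbdef
  set S : Set (↥(Heis m) → ℚ) :=
    {f : ↥(Heis m) → ℚ | ∃ (g : ↥(Heis m)) (k : Fin (2 * m + 1)),
      f = fun h => t k (h * g⁻¹)} with hSdef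
  have hsurj := hmal.1.2
  -- t k is in S
  have ht_mem : ∀ k : Fin (2 * m + 1), t k ∈ S := by
    intro k
    exact ⟨1, k, by funext h; rw [inv_one, mul_one]⟩
  -- t k is in the range of b
  have ht_range : ∀ k : Fin (2 * m + 1), t k ∈ Set.range b := by
    intro k
    refine ⟨⟨(k : ℕ), by omega⟩, ?_⟩
    simp only [hbdef]
    simp only [dif_pos (show ((⟨(k : ℕ), by omega⟩ : Fin (2 * m + 2)) : ℕ) < 2 * m + 1
      from k.isLt)]
  have hone_range : (fun _ => (1 : ℚ)) ∈ Set.range b := by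
    refine ⟨⟨2 * m + 1, by omega⟩, ?_⟩
    simp only [hbdef]
    simp
  -- the constant function 1 lies in the span of S
  have hone_span : (fun _ => (1 : ℚ)) ∈ Submodule.span ℚ S := by
    set y0 : Fin (2 * m + 1) → ℤ := Pi.single (idxC m) 1 with hy0
    set g0 : ↥(Heis m) := (malcevProd (heisBasis m) y0)⁻¹ with hg0
    have hf0 : (fun h => t (idxC m) (h * g0⁻¹)) ∈ S := ⟨g0, idxC m, rfl⟩
    have hyA : ∀ i : Fin m, y0 (idxA m i) = 0 := by
      intro i
      refine Pi.single_eq_of_ne (fun hc => ?_) 1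
      have hi := i.isLt
      have hv : (i : ℕ) = 2 * m := (congrArg Fin.val hc : (i : ℕ) = 2 * m)
      omega
    have hf0' : (fun h => t (idxC m) (h * g0⁻¹)) = t (idxC m) + (fun _ => (1 : ℚ)) := by
      funext h
      obtain ⟨x, rfl⟩ := hsurj h
      rw [hg0, inv_inv, malcev_comp, ht, zc_idxC]
      have hyC : y0 (idxC m) = 1 := Pi.single_eq_same _ _
      simp only [hyA, zero_mul, Finset.sum_const_zero, hyC]
      rw [Pi.add_apply, ht]
      push_cast
      ring
    have : (fun _ => (1 : ℚ)) = (fun h => t (idxC m) (h * g0⁻¹)) - t (idxC m) := by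
      rw [hf0']; abel
    rw [this]
    exact Submodule.sub_mem _ (Submodule.subset_span hf0)
      (Submodule.subset_span (ht_mem _))
  -- span equality
  have hspan : Submodule.span ℚ S = Submodule.span ℚ (Set.range b) := by
    apply le_antisymm
    · rw [Submodule.span_le]
      rintro f ⟨g, k, rfl⟩
      obtain ⟨y, hy⟩ := hsurj g⁻¹
      by_cases hk : (k : ℕ) < 2 * m
      · have hf : (fun h => t k (h * g⁻¹))
            = t k + (y k : ℚ) • (fun _ => (1 : ℚ)) := by
          funext h
          obtain ⟨x, rfl⟩ := hsurj h
          rw [← hy, malcev_comp, ht]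
          rw [Pi.add_apply, Pi.smul_apply, ht, smul_eq_mul, mul_one]
          rw [zc, if_pos hk]
          push_cast
          ring
        rw [hf]
        exact Submodule.add_mem _ (Submodule.subset_span (ht_range k))
          (Submodule.smul_mem _ _ (Submodule.subset_span hone_range))
      · have hkC : k = idxC m := by
          have := k.isLt
          simp only [idxC, Fin.ext_iff]
          omega
        subst hkC
        have hf : (fun h => t (idxC m) (h * g⁻¹))
            = t (idxC m) + (y (idxC m) : ℚ) • (fun _ => (1 : ℚ))
              - ∑ i : Fin m, (y (idxA m i) : ℚ) • t (idxB m i) := by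
          funext h
          obtain ⟨x, rfl⟩ := hsurj h
          rw [← hy, malcev_comp, ht, zc_idxC]
          simp only [Pi.sub_apply, Pi.add_apply, Pi.smul_apply, smul_eq_mul, mul_one,
            Finset.sum_apply, ht]
          push_cast
          ring
        rw [hf]
        refine Submodule.sub_mem _ (Submodule.add_mem _
          (Submodule.subset_span (ht_range _))
          (Submodule.smul_mem _ _ (Submodule.subset_span hone_range)))
          (Submodule.sum_mem _ fun i _ => Submodule.smul_mem _ _
            (Submodule.subset_span (ht_range _)))
    · rw [Submodule.span_le]
      rintro f ⟨k, rfl⟩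
      by_cases hk : (k : ℕ) < 2 * m + 1
      · simp only [hbdef]
        rw [dif_pos hk]
        exact Submodule.subset_span (ht_mem _)
      · simp only [hbdef]
        rw [dif_neg hk]
        exact hone_span
  -- values of b at malcevProd points
  have hbp : ∀ (x : Fin (2 * m + 1) → ℤ) (j : Fin (2 * m + 2)),
      b j (malcevProd (heisBasis m) x)
        = if h : (j : ℕ) < 2 * m + 1 then ((x ⟨(j : ℕ), h⟩ : ℤ) : ℚ) else 1 := by
    intro x j
    by_cases h : (j : ℕ) < 2 * m + 1
    · simp only [hbdef]; rw [dif_pos h, ht, dif_pos h]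
    · simp only [hbdef]; rw [dif_neg h, dif_neg h]
  -- linear independence
  have hli : LinearIndependent ℚ b := by
    rw [Fintype.linearIndependent_iff]
    intro g hg
    have heval : ∀ x : Fin (2 * m + 1) → ℤ,
        (∑ j : Fin (2 * m + 2), g j *
          (if h : (j : ℕ) < 2 * m + 1 then ((x ⟨(j : ℕ), h⟩ : ℤ) : ℚ) else 1)) = 0 := by
      intro x
      have := congrFun hg (malcevProd (heisBasis m) x)
      simp only [Finset.sum_apply, Pi.smul_apply, smul_eq_mul, Pi.zero_apply] at this
      rw [← this]
      exact Finset.sum_congr rfl fun j _ => by rw [hbp x j]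
    have hlast : g ⟨2 * m + 1, by omega⟩ = 0 := by
      have h0 := heval 0
      rw [Finset.sum_eq_single (⟨2 * m + 1, by omega⟩ : Fin (2 * m + 2))] at h0
      · simpa using h0
      · intro j _ hj
        have hjlt : (j : ℕ) < 2 * m + 1 := by
          have := j.isLt
          have : (j : ℕ) ≠ 2 * m + 1 := fun hc => hj (Fin.ext hc)
          omega
        rw [dif_pos hjlt]; simp
      · intro hc; exact absurd (Finset.mem_univ _) hc
    intro i
    by_cases hi : (i : ℕ) < 2 * m + 1
    · have h1 := heval (Pi.single ⟨(i : ℕ), hi⟩ 1)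
      rw [Finset.sum_eq_single i] at h1
      · rw [dif_pos hi] at h1
        simpa [Pi.single_eq_same] using h1
      · intro j _ hj
        by_cases hjlt : (j : ℕ) < 2 * m + 1
        · rw [dif_pos hjlt]
          have : (⟨(j : ℕ), hjlt⟩ : Fin (2 * m + 1)) ≠ ⟨(i : ℕ), hi⟩ :=
            fun hc => hj (by apply Fin.ext; exact congrArg (fun z : Fin (2 * m + 1) => (z : ℕ)) hc)
          rw [Pi.single_eq_of_ne this]
          simp
        · rw [dif_neg hjlt]
          have : j = ⟨2 * m + 1, by omega⟩ := by
            have := j.isLt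
            apply Fin.ext
            show (j : ℕ) = 2 * m + 1
            omega
          rw [this, hlast, zero_mul]
      · intro hc; exact absurd (Finset.mem_univ _) hc
    · have : i = ⟨2 * m + 1, by omega⟩ := by
        have := i.isLt
        apply Fin.ext
        show (i : ℕ) = 2 * m + 1
        omega
      rw [this]
      exact hlast
  refine ⟨hspan, hli, ?_⟩
  rw [show Submodule.span ℚ S = Submodule.span ℚ (Set.range b) from hspan]
  rw [finrank_span_eq_card hli]
  simp
end

section
/- Let G be a group with Mal'cev basis (a_1, …, a_p) and H a group with Mal'cev basis (b_1, …, b_q), with p, q ≥ 1. Then ((a_1,1), …, (a_p,1), (1,b_1), …, (1,b_q)) is a Mal'cev basis of the direct product G × H, and if the Nickel modules of G and of H have finite ℚ-dimensions M and N respectively, then the Nickel module of G × H with respect to this Mal'cev basis has ℚ-dimension M + N − 1. -/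
open scoped TensorProduct
open scoped commutatorElement

private lemma malcevProd_ofFn {G : Type*} [Group G] {n : ℕ} (a : Fin n → G) (x : Fin n → ℤ) :
    malcevProd a x = (List.ofFn fun i => a i ^ x i).prod := by
  rw [malcevProd, ← List.ofFn_eq_map]

private lemma malcevProd_hom {G K : Type*} [Group G] [Group K] {n : ℕ}
    (φ : G →* K) (a : Fin n → G) (x : Fin n → ℤ) :
    φ (malcevProd a x) = malcevProd (fun i => φ (a i)) x := by
  rw [malcevProd_ofFn, malcevProd_ofFn, map_list_prod, List.map_ofFn]
  have h : (φ ∘ fun i => a i ^ x i) = fun i => φ (a i) ^ x i := by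
    funext i
    simp
  rw [h]

private lemma malcevProd_append_one {G : Type*} [Group G] {p q : ℕ}
    (a : Fin p → G) (x : Fin (p + q) → ℤ) :
    malcevProd (Fin.append a fun _ : Fin q => (1 : G)) x = malcevProd a (x ∘ Fin.castAdd q) := by
  rw [malcevProd_ofFn, List.ofFn_add, List.prod_append, malcevProd_ofFn]
  have h2 : (List.ofFn fun j : Fin q =>
      Fin.append a (fun _ => (1 : G)) (Fin.natAdd p j) ^ x (Fin.natAdd p j)).prod = 1 := by
    apply List.prod_eq_one
    intro y hy
    rw [List.mem_ofFn] at hy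
    obtain ⟨j, rfl⟩ := hy
    simp [Fin.append_right]
  rw [h2, mul_one]
  have h3 : (fun i : Fin p => Fin.append a (fun _ => (1 : G)) (Fin.castAdd q i) ^ x (Fin.castAdd q i))
      = fun i => a i ^ (x ∘ Fin.castAdd q) i := by
    funext i
    simp [Fin.append_left, Function.comp]
  exact congrArg (fun f => (List.ofFn f).prod) h3

private lemma malcevProd_one_append {G : Type*} [Group G] {p q : ℕ}
    (b : Fin q → G) (x : Fin (p + q) → ℤ) :
    malcevProd (Fin.append (fun _ : Fin p => (1 : G)) b) x = malcevProd b (x ∘ Fin.natAdd p) := by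
  rw [malcevProd_ofFn, List.ofFn_add, List.prod_append, malcevProd_ofFn]
  have h2 : (List.ofFn fun i : Fin p =>
      Fin.append (fun _ => (1 : G)) b (Fin.castAdd q i) ^ x (Fin.castAdd q i)).prod = 1 := by
    apply List.prod_eq_one
    intro y hy
    rw [List.mem_ofFn] at hy
    obtain ⟨i, rfl⟩ := hy
    simp [Fin.append_left]
  erw [h2, one_mul]
  have h3 : (fun j : Fin q => Fin.append (fun _ => (1 : G)) b (Fin.natAdd p j) ^ x (Fin.natAdd p j))
      = fun j => b j ^ (x ∘ Fin.natAdd p) j := by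
    funext j
    simp [Fin.append_right, Function.comp]
  rw [h3]

private lemma malcevProd_pair {G H : Type*} [Group G] [Group H] {p q : ℕ}
    (a : Fin p → G) (b : Fin q → H) (x : Fin (p + q) → ℤ) :
    malcevProd (Fin.append (fun i => ((a i, 1) : G × H)) fun j => ((1, b j) : G × H)) x =
      (malcevProd a (x ∘ Fin.castAdd q), malcevProd b (x ∘ Fin.natAdd p)) := by
  have hfst := malcevProd_hom (MonoidHom.fst G H)
    (Fin.append (fun i => ((a i, 1) : G × H)) fun j => ((1, b j) : G × H)) x
  have hsnd := malcevProd_hom (MonoidHom.snd G H)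
    (Fin.append (fun i => ((a i, 1) : G × H)) fun j => ((1, b j) : G × H)) x
  have e1 : (fun k => (MonoidHom.fst G H)
      ((Fin.append (fun i => ((a i, 1) : G × H)) fun j => ((1, b j) : G × H)) k)) =
      Fin.append a fun _ : Fin q => (1 : G) := by
    funext k
    induction k using Fin.addCases with
    | left i => simp [Fin.append_left]
    | right j => simp [Fin.append_right]
  have e2 : (fun k => (MonoidHom.snd G H)
      ((Fin.append (fun i => ((a i, 1) : G × H)) fun j => ((1, b j) : G × H)) k)) =
      Fin.append (fun _ : Fin p => (1 : H)) b := by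
    funext k
    induction k using Fin.addCases with
    | left i => simp [Fin.append_left]
    | right j => simp [Fin.append_right]
  rw [e1] at hfst
  rw [e2] at hsnd
  rw [malcevProd_append_one] at hfst
  rw [malcevProd_one_append] at hsnd
  exact Prod.ext hfst hsnd

private lemma mem_closure_fst' {G H : Type*} [Group G] [Group H] {S : Set (G × H)}
    {w : G × H} (hw : w ∈ Subgroup.closure S) : w.1 ∈ Subgroup.closure (Prod.fst '' S) := by
  have := Subgroup.mem_map_of_mem (MonoidHom.fst G H) hw
  rwa [MonoidHom.map_closure] at this

private lemma mem_closure_snd' {G H : Type*} [Group G] [Group H] {S : Set (G × H)}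
    {w : G × H} (hw : w ∈ Subgroup.closure S) : w.2 ∈ Subgroup.closure (Prod.snd '' S) := by
  have := Subgroup.mem_map_of_mem (MonoidHom.snd G H) hw
  rwa [MonoidHom.map_closure] at this

private lemma pair_mem_closure' {G H : Type*} [Group G] [Group H] {S : Set (G × H)}
    {A : Set G} {B : Set H} (hA : ∀ y ∈ A, ((y, 1) : G × H) ∈ S)
    (hB : ∀ y ∈ B, ((1, y) : G × H) ∈ S)
    {u : G} {v : H} (hu : u ∈ Subgroup.closure A) (hv : v ∈ Subgroup.closure B) :
    ((u, v) : G × H) ∈ Subgroup.closure S := by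
  have h1 : ((u, 1) : G × H) ∈ Subgroup.closure S := by
    have := Subgroup.mem_map_of_mem (MonoidHom.inl G H) hu
    rw [MonoidHom.map_closure] at this
    refine Subgroup.closure_mono ?_ this
    rintro _ ⟨y, hy, rfl⟩
    exact hA y hy
  have h2 : ((1, v) : G × H) ∈ Subgroup.closure S := by
    have := Subgroup.mem_map_of_mem (MonoidHom.inr G H) hv
    rw [MonoidHom.map_closure] at this
    refine Subgroup.closure_mono ?_ this
    rintro _ ⟨y, hy, rfl⟩
    exact hB y hy
  have h3 : ((u, v) : G × H) = ((u, 1) : G × H) * ((1, v) : G × H) := by simp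
  rw [h3]
  exact mul_mem h1 h2

private lemma mem_closure_of_range_subset {G : Type*} [Group G] {n : ℕ} {a : Fin n → G}
    (hma : Function.Surjective (malcevProd a)) (g : G) {A : Set G} (hA : Set.range a ⊆ A) :
    g ∈ Subgroup.closure A := by
  obtain ⟨x, rfl⟩ := hma g
  rw [malcevProd]
  refine Subgroup.list_prod_mem _ ?_
  intro z hz
  simp only [List.mem_map, List.mem_finRange] at hz
  obtain ⟨i, -, rfl⟩ := hz
  exact zpow_mem (Subgroup.subset_closure (hA ⟨i, rfl⟩)) _

private lemma closure_le_of_subset_union_one {G : Type*} [Group G] {S T : Set G}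
    (h : S ⊆ T ∪ {1}) : Subgroup.closure S ≤ Subgroup.closure T := by
  have h2 : Subgroup.closure (T ∪ {1}) = Subgroup.closure T := by
    rw [Subgroup.closure_union, Subgroup.closure_singleton_one, sup_bot_eq]
  exact h2 ▸ Subgroup.closure_mono h

private lemma const_one_mem_nickel {G : Type*} [Group G] {n : ℕ} (hn : 1 ≤ n)
    (a : Fin n → G) (hma : IsMalcevBasis a) (tG : Fin n → G → ℚ)
    (htG : ∀ (x : Fin n → ℤ) (k : Fin n), tG k (malcevProd a x) = (x k : ℚ)) :
    (fun _ : G => (1 : ℚ)) ∈ Submodule.span ℚ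
      {f : G → ℚ | ∃ (g : G) (k : Fin n), f = fun h => tG k (h * g⁻¹)} := by
  obtain ⟨m, rfl⟩ : ∃ m, n = m + 1 := ⟨n - 1, by omega⟩
  set k := Fin.last m with hk
  have hsplit : ∀ y : Fin (m + 1) → ℤ, malcevProd a y =
      (List.ofFn fun i : Fin m => a i.castSucc ^ y i.castSucc).prod * a k ^ y k := by
    intro y
    rw [malcevProd_ofFn, List.ofFn_succ', List.concat_eq_append, List.prod_append,
      List.prod_singleton]
  have key : ∀ g : G, tG k (g * (a k)⁻¹) = tG k g - 1 := by
    intro g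
    obtain ⟨x, rfl⟩ := hma.1.2 g
    have h2 : malcevProd a x * (a k)⁻¹ = malcevProd a (Function.update x k (x k - 1)) := by
      rw [hsplit, hsplit, Function.update_self, mul_assoc]
      congr 1
      · have h4 : (fun i : Fin m => a i.castSucc ^ x i.castSucc)
            = fun i : Fin m => a i.castSucc ^ Function.update x k (x k - 1) i.castSucc := by
          funext i
          rw [Function.update_of_ne (Fin.castSucc_lt_last i).ne]
        rw [h4]
      · rw [← zpow_sub_one]
    rw [h2, htG, htG, Function.update_self]
    push_cast
    ring
  have h1 : (fun h => tG k (h * (1 : G)⁻¹)) ∈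
      {f : G → ℚ | ∃ (g : G) (k' : Fin (m + 1)), f = fun h => tG k' (h * g⁻¹)} := ⟨1, k, rfl⟩
  have h2 : (fun h => tG k (h * (a k)⁻¹)) ∈
      {f : G → ℚ | ∃ (g : G) (k' : Fin (m + 1)), f = fun h => tG k' (h * g⁻¹)} := ⟨a k, k, rfl⟩
  have h3 : (fun _ : G => (1 : ℚ)) =
      (fun h => tG k (h * (1 : G)⁻¹)) - fun h => tG k (h * (a k)⁻¹) := by
    funext h
    simp [key h]
  rw [h3]
  exact sub_mem (Submodule.subset_span h1) (Submodule.subset_span h2)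

theorem nickel_direct_product (G H : Type*) [Group G] [Group H]
    (p q : ℕ) (hp : 1 ≤ p) (hq : 1 ≤ q)
    (a : Fin p → G) (b : Fin q → H)
    (hma : IsMalcevBasis a) (hmb : IsMalcevBasis b)
    (tG : Fin p → G → ℚ)
    (htG : ∀ (x : Fin p → ℤ) (k : Fin p), tG k (malcevProd a x) = (x k : ℚ))
    (tH : Fin q → H → ℚ)
    (htH : ∀ (x : Fin q → ℤ) (k : Fin q), tH k (malcevProd b x) = (x k : ℚ))
    (M N : ℕ)
    (hMfin : Module.Finite ℚ ↥(Submodule.span ℚ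
      {f : G → ℚ | ∃ (g : G) (k : Fin p), f = fun h => tG k (h * g⁻¹)}))
    (hM : Module.finrank ℚ ↥(Submodule.span ℚ
      {f : G → ℚ | ∃ (g : G) (k : Fin p), f = fun h => tG k (h * g⁻¹)}) = M)
    (hNfin : Module.Finite ℚ ↥(Submodule.span ℚ
      {f : H → ℚ | ∃ (g : H) (k : Fin q), f = fun h => tH k (h * g⁻¹)}))
    (hN : Module.finrank ℚ ↥(Submodule.span ℚ
      {f : H → ℚ | ∃ (g : H) (k : Fin q), f = fun h => tH k (h * g⁻¹)}) = N) :
    IsMalcevBasis (Fin.append (fun i => ((a i, 1) : G × H)) fun j => ((1, b j) : G × H)) ∧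
    ∀ tP : Fin (p + q) → G × H → ℚ,
      (∀ (x : Fin (p + q) → ℤ) (k : Fin (p + q)),
        tP k (malcevProd
          (Fin.append (fun i => ((a i, 1) : G × H)) fun j => ((1, b j) : G × H)) x) =
          (x k : ℚ)) →
      Module.finrank ℚ ↥(Submodule.span ℚ
        {f : G × H → ℚ | ∃ (g : G × H) (k : Fin (p + q)), f = fun h => tP k (h * g⁻¹)}) =
        M + N - 1 := by
  have hcomm : ∀ g h : G × H, ⁅g, h⁆ = ((⁅g.1, h.1⁆, ⁅g.2, h.2⁆) : G × H) := fun g h => rfl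
  constructor
  · constructor
    · constructor
      · intro x x' hxx'
        rw [malcevProd_pair, malcevProd_pair, Prod.mk.injEq] at hxx'
        have h1 := hma.1.1 hxx'.1
        have h2 := hmb.1.1 hxx'.2
        funext k
        induction k using Fin.addCases with
        | left i => exact congrFun h1 i
        | right j => exact congrFun h2 j
      · rintro ⟨g, h⟩
        obtain ⟨x, hx⟩ := hma.1.2 g
        obtain ⟨y, hy⟩ := hmb.1.2 h
        refine ⟨Fin.addCases x y, ?_⟩
        rw [malcevProd_pair]
        have e1 : (Fin.addCases (motive := fun _ => ℤ) x y) ∘ Fin.castAdd q = x := by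
          funext i; simp
        have e2 : (Fin.addCases (motive := fun _ => ℤ) x y) ∘ Fin.natAdd p = y := by
          funext j; simp
        rw [e1, e2, hx, hy]
    · intro i g h hmem
      have hfst := mem_closure_fst' hmem
      have hsnd := mem_closure_snd' hmem
      induction i using Fin.addCases with
      | left i₀ =>
        have hA : Prod.fst '' {y | ∃ j : Fin (p + q), Fin.castAdd q i₀ ≤ j ∧
            y = (Fin.append (fun i => ((a i, 1) : G × H)) fun j => ((1, b j) : G × H)) j} ⊆
            {y | ∃ j : Fin p, i₀ ≤ j ∧ y = a j} ∪ {1} := by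
          rintro _ ⟨y, ⟨j, hj, rfl⟩, rfl⟩
          induction j using Fin.addCases with
          | left j₀ =>
            left
            refine ⟨j₀, ?_, ?_⟩
            · rw [Fin.le_def] at hj
              simp only [Fin.coe_castAdd] at hj
              exact hj
            · simp [Fin.append_left]
          | right j₁ =>
            right
            simp [Fin.append_right]
        have h1 : h.1 ∈ Subgroup.closure {y | ∃ j : Fin p, i₀ ≤ j ∧ y = a j} :=
          closure_le_of_subset_union_one hA hfst
        have hu := hma.2 i₀ g.1 h.1 h1
        have hv : ⁅g.2, h.2⁆ ∈ Subgroup.closure (Set.range b) :=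
          mem_closure_of_range_subset hmb.1.2 _ subset_rfl
        rw [hcomm]
        refine pair_mem_closure' ?_ ?_ hu hv
        · rintro y ⟨j, hj, rfl⟩
          refine ⟨Fin.castAdd q j, ?_, ?_⟩
          · rw [Fin.lt_def]
            simpa using hj
          · simp [Fin.append_left]
        · rintro _ ⟨j, rfl⟩
          refine ⟨Fin.natAdd p j, ?_, ?_⟩
          · rw [Fin.lt_def]
            have := i₀.isLt
            simp only [Fin.coe_castAdd, Fin.coe_natAdd]
            omega
          · simp [Fin.append_right]
      | right i₁ =>
        have hA : Prod.fst '' {y | ∃ j : Fin (p + q), Fin.natAdd p i₁ ≤ j ∧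
            y = (Fin.append (fun i => ((a i, 1) : G × H)) fun j => ((1, b j) : G × H)) j} ⊆
            (∅ : Set G) ∪ {1} := by
          rintro _ ⟨y, ⟨j, hj, rfl⟩, rfl⟩
          induction j using Fin.addCases with
          | left j₀ =>
            exfalso
            rw [Fin.le_def] at hj
            simp only [Fin.coe_castAdd, Fin.coe_natAdd] at hj
            have := j₀.isLt
            omega
          | right j₁ =>
            right
            simp [Fin.append_right]
        have h1 : h.1 = 1 := by
          have h2 := closure_le_of_subset_union_one hA hfst
          rw [Subgroup.closure_empty, Subgroup.mem_bot] at h2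
          exact h2
        have hB : Prod.snd '' {y | ∃ j : Fin (p + q), Fin.natAdd p i₁ ≤ j ∧
            y = (Fin.append (fun i => ((a i, 1) : G × H)) fun j => ((1, b j) : G × H)) j} ⊆
            {y | ∃ j : Fin q, i₁ ≤ j ∧ y = b j} ∪ {1} := by
          rintro _ ⟨y, ⟨j, hj, rfl⟩, rfl⟩
          induction j using Fin.addCases with
          | left j₀ =>
            right
            simp [Fin.append_left]
          | right j₁ =>
            left
            refine ⟨j₁, ?_, ?_⟩
            · rw [Fin.le_def] at hj
              simp only [Fin.coe_natAdd] at hj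
              rw [Fin.le_def]
              omega
            · simp [Fin.append_right]
        have h2 : h.2 ∈ Subgroup.closure {y | ∃ j : Fin q, i₁ ≤ j ∧ y = b j} :=
          closure_le_of_subset_union_one hB hsnd
        have hv := hmb.2 i₁ g.2 h.2 h2
        rw [hcomm, h1, commutatorElement_one_right]
        refine pair_mem_closure' (A := ∅) ?_ ?_ (one_mem _) hv
        · rintro y hy
          exact absurd hy (Set.notMem_empty y)
        · rintro y ⟨j, hj, rfl⟩
          refine ⟨Fin.natAdd p j, ?_, ?_⟩
          · rw [Fin.lt_def]
            simp only [Fin.coe_natAdd]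
            rw [Fin.lt_def] at hj
            omega
          · simp [Fin.append_right]
  · intro tP htP
    have hPG : ∀ (i : Fin p) (w : G × H), tP (Fin.castAdd q i) w = tG i w.1 := by
      intro i w
      obtain ⟨x, hx⟩ := hma.1.2 w.1
      obtain ⟨y, hy⟩ := hmb.1.2 w.2
      have hz : malcevProd
          (Fin.append (fun i => ((a i, 1) : G × H)) fun j => ((1, b j) : G × H))
          (Fin.addCases (motive := fun _ => ℤ) x y) = w := by
        rw [malcevProd_pair]
        have e1 : (Fin.addCases (motive := fun _ => ℤ) x y) ∘ Fin.castAdd q = x := by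
          funext i; simp
        have e2 : (Fin.addCases (motive := fun _ => ℤ) x y) ∘ Fin.natAdd p = y := by
          funext j; simp
        rw [e1, e2, hx, hy]
      have h3 := htP (Fin.addCases (motive := fun _ => ℤ) x y) (Fin.castAdd q i)
      rw [hz] at h3
      rw [h3, ← hx, htG]
      simp
    have hPH : ∀ (j : Fin q) (w : G × H), tP (Fin.natAdd p j) w = tH j w.2 := by
      intro j w
      obtain ⟨x, hx⟩ := hma.1.2 w.1
      obtain ⟨y, hy⟩ := hmb.1.2 w.2
      have hz : malcevProd
          (Fin.append (fun i => ((a i, 1) : G × H)) fun j => ((1, b j) : G × H))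
          (Fin.addCases (motive := fun _ => ℤ) x y) = w := by
        rw [malcevProd_pair]
        have e1 : (Fin.addCases (motive := fun _ => ℤ) x y) ∘ Fin.castAdd q = x := by
          funext i; simp
        have e2 : (Fin.addCases (motive := fun _ => ℤ) x y) ∘ Fin.natAdd p = y := by
          funext j; simp
        rw [e1, e2, hx, hy]
      have h3 := htP (Fin.addCases (motive := fun _ => ℤ) x y) (Fin.natAdd p j)
      rw [hz] at h3
      rw [h3, ← hy, htH]
      simp
    set ΦG : (G → ℚ) →ₗ[ℚ] (G × H → ℚ) := LinearMap.funLeft ℚ ℚ Prod.fst with hΦG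
    set ΦH : (H → ℚ) →ₗ[ℚ] (G × H → ℚ) := LinearMap.funLeft ℚ ℚ Prod.snd with hΦH
    have hΦG_inj : Function.Injective ΦG :=
      LinearMap.funLeft_injective_of_surjective ℚ ℚ _ Prod.fst_surjective
    have hΦH_inj : Function.Injective ΦH :=
      LinearMap.funLeft_injective_of_surjective ℚ ℚ _ Prod.snd_surjective
    set NG := Submodule.span ℚ
      {f : G → ℚ | ∃ (g : G) (k : Fin p), f = fun h => tG k (h * g⁻¹)} with hNG
    set NH := Submodule.span ℚ
      {f : H → ℚ | ∃ (g : H) (k : Fin q), f = fun h => tH k (h * g⁻¹)} with hNH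
    set U := Submodule.map ΦG NG with hU
    set V := Submodule.map ΦH NH with hV
    have hUV : Submodule.span ℚ
        {f : G × H → ℚ | ∃ (g : G × H) (k : Fin (p + q)), f = fun h => tP k (h * g⁻¹)} =
        U ⊔ V := by
      apply le_antisymm
      · rw [Submodule.span_le]
        rintro _ ⟨g₀, k, rfl⟩
        induction k using Fin.addCases with
        | left i =>
          apply Submodule.mem_sup_left
          refine Submodule.mem_map.2 ⟨fun h => tG i (h * g₀.1⁻¹),
            Submodule.subset_span ⟨g₀.1, i, rfl⟩, ?_⟩
          funext w
          show tG i (w.1 * g₀.1⁻¹) = tP (Fin.castAdd q i) (w * g₀⁻¹)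
          rw [hPG]
          rfl
        | right j =>
          apply Submodule.mem_sup_right
          refine Submodule.mem_map.2 ⟨fun h => tH j (h * g₀.2⁻¹),
            Submodule.subset_span ⟨g₀.2, j, rfl⟩, ?_⟩
          funext w
          show tH j (w.2 * g₀.2⁻¹) = tP (Fin.natAdd p j) (w * g₀⁻¹)
          rw [hPH]
          rfl
      · refine sup_le ?_ ?_
        · rw [hU, hNG, Submodule.map_span, Submodule.span_le]
          rintro _ ⟨f, ⟨g₀, i, rfl⟩, rfl⟩
          apply Submodule.subset_span
          refine ⟨((g₀, 1) : G × H), Fin.castAdd q i, ?_⟩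
          funext w
          show tG i (w.1 * g₀⁻¹) = tP (Fin.castAdd q i) (w * ((g₀, 1) : G × H)⁻¹)
          rw [hPG]
          rfl
        · rw [hV, hNH, Submodule.map_span, Submodule.span_le]
          rintro _ ⟨f, ⟨g₀, j, rfl⟩, rfl⟩
          apply Submodule.subset_span
          refine ⟨((1, g₀) : G × H), Fin.natAdd p j, ?_⟩
          funext w
          show tH j (w.2 * g₀⁻¹) = tP (Fin.natAdd p j) (w * ((1, g₀) : G × H)⁻¹)
          rw [hPH]
          rfl
    have hconstG := const_one_mem_nickel hp a hma tG htG
    have hconstH := const_one_mem_nickel hq b hmb tH htH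
    have hinf : U ⊓ V = Submodule.span ℚ {(fun _ : G × H => (1 : ℚ))} := by
      apply le_antisymm
      · rintro f ⟨hfU, hfV⟩
        obtain ⟨u, -, huf⟩ := hfU
        obtain ⟨v, -, hvf⟩ := hfV
        have hval1 : ∀ w : G × H, f w = u w.1 := fun w => by rw [← huf]; rfl
        have hval2 : ∀ w : G × H, f w = v w.2 := fun w => by rw [← hvf]; rfl
        have hf : f = (v 1) • (fun _ : G × H => (1 : ℚ)) := by
          funext w
          have e1 : f (w.1, 1) = u w.1 := hval1 _
          have e2 : f (w.1, 1) = v 1 := hval2 _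
          have e3 : f w = u w.1 := hval1 w
          simp [e3, ← e1, e2]
        rw [hf]
        exact Submodule.smul_mem _ _ (Submodule.subset_span rfl)
      · rw [Submodule.span_le, Set.singleton_subset_iff]
        constructor
        · exact ⟨fun _ => 1, hconstG, rfl⟩
        · exact ⟨fun _ => 1, hconstH, rfl⟩
    haveI : Module.Finite ℚ NG := hMfin
    haveI : Module.Finite ℚ NH := hNfin
    have eG := Submodule.equivMapOfInjective ΦG hΦG_inj NG
    have eH := Submodule.equivMapOfInjective ΦH hΦH_inj NH
    haveI : Module.Finite ℚ U := Module.Finite.equiv eG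
    haveI : Module.Finite ℚ V := Module.Finite.equiv eH
    have hUM : Module.finrank ℚ U = M := by
      rw [← hM]
      exact (LinearEquiv.finrank_eq eG).symm
    have hVN : Module.finrank ℚ V = N := by
      rw [← hN]
      exact (LinearEquiv.finrank_eq eH).symm
    have hone : (fun _ : G × H => (1 : ℚ)) ≠ 0 := by
      intro hcon
      have := congrFun hcon (1, 1)
      simp at this
    have hinf1 : Module.finrank ℚ ↥(U ⊓ V) = 1 := by
      rw [hinf]
      exact finrank_span_singleton hone
    have hsum := Submodule.finrank_sup_add_finrank_inf_eq U V
    rw [hUM, hVN, hinf1] at hsum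
    rw [hUV]
    omega
end

section
/- Let m ≥ 2, n = m(m−1)/2, μ = ⌊m/2⌋, and consider UT_m(ℤ) with its standard Mal'cev basis and coordinate functions t_{i,j}. Then for every g ∈ UT_m(ℤ) and every pair 1 ≤ k < ℓ ≤ m there exists a polynomial P ∈ ℚ[x_{i,j} : 1 ≤ i < j ≤ m] such that (g • t_{k,ℓ})(h) = P((t_{i,j}(h))_{i<j}) for all h ∈ UT_m(ℤ), and every monomial of P that contains a variable x_{i,j} with j − i ≥ m − μ has total degree 1. -/
open scoped TensorProduct
open scoped commutatorElement

namespace LMUT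

open Matrix

variable {m : ℕ}

/-- underlying integer matrix of an element of `UT m` -/
def mval (A : ↥(UT m)) : Matrix (Fin m) (Fin m) ℤ := A.val.val

lemma mval_mul (A B : ↥(UT m)) : mval (A * B) = mval A * mval B := rfl

lemma mval_one : mval (1 : ↥(UT m)) = 1 := rfl

lemma mval_injective : Function.Injective (mval (m := m)) := by
  intro A B h
  exact Subtype.ext (Units.ext h)

lemma mval_upper (A : ↥(UT m)) : ∀ i j : Fin m, j < i → mval A i j = 0 := A.2.1

lemma mval_diag (A : ↥(UT m)) : ∀ i : Fin m, mval A i i = 1 := A.2.2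

lemma mval_mul_inv (A : ↥(UT m)) : mval A * mval A⁻¹ = 1 := by
  rw [← mval_mul, mul_inv_cancel, mval_one]

/-- gap of a pair -/
def gp (p : Pears m) : ℕ := (p.1.2 : ℕ) - (p.1.1 : ℕ)

lemma gp_pos (p : Pears m) : 1 ≤ gp p := by
  have := p.2
  simp only [gp]
  omega

lemma gp_add (p : Pears m) : (p.1.1 : ℕ) + gp p = (p.1.2 : ℕ) := by
  have : (p.1.1:ℕ) < (p.1.2:ℕ) := p.2
  simp only [gp]; omega

/-- elementary matrix at a pair -/
def Bq (q : Pears m) : Matrix (Fin m) (Fin m) ℤ := Matrix.single q.1.1 q.1.2 1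

/-- threshold -/
def c0 (m : ℕ) : ℕ := m - m / 2

lemma c0_pos (hm : 2 ≤ m) : 1 ≤ c0 m := by unfold c0; omega

lemma c0_lt (hm : 2 ≤ m) : c0 m < m := by unfold c0; omega

lemma two_c0 (hm : 2 ≤ m) : m ≤ 2 * c0 m := by unfold c0; omega

/-- matrices supported on long gaps -/
def LM (M : Matrix (Fin m) (Fin m) ℤ) : Prop :=
  ∀ a b : Fin m, M a b ≠ 0 → (a : ℕ) + c0 m ≤ (b : ℕ)

lemma LM_zero : LM (0 : Matrix (Fin m) (Fin m) ℤ) := by intro a b h; simp at h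

lemma LM_add {M N : Matrix (Fin m) (Fin m) ℤ} (hM : LM M) (hN : LM N) : LM (M + N) := by
  intro a b h
  rw [Matrix.add_apply] at h
  rcases ne_or_eq (M a b) 0 with h' | h'
  · exact hM a b h'
  · exact hN a b (by rw [h', zero_add] at h; exact h)

lemma LM_smul {M : Matrix (Fin m) (Fin m) ℤ} (hM : LM M) (z : ℤ) : LM (z • M) := by
  intro a b h
  apply hM a b
  intro h0
  rw [Matrix.smul_apply, h0, smul_zero] at h
  exact h rfl

lemma LM_Bq {q : Pears m} (hq : c0 m ≤ gp q) : LM (Bq q) := by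
  intro a b h
  have : ¬ (q.1.1 = a ∧ q.1.2 = b) → Bq q a b = 0 := by
    intro hne
    unfold Bq
    rw [Matrix.single]
    simp only [Matrix.of_apply]
    rw [if_neg hne]
  by_cases hc : q.1.1 = a ∧ q.1.2 = b
  · obtain ⟨h1, h2⟩ := hc
    subst h1; subst h2
    have := gp_add q
    omega
  · exact absurd (this hc) h

lemma LM_sum {α : Type*} {s : Finset α} {f : α → Matrix (Fin m) (Fin m) ℤ}
    (hf : ∀ i ∈ s, LM (f i)) : LM (s.sum f) := by
  classical
  induction s using Finset.induction with
  | empty => simpa using LM_zero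
  | insert _ _ hni ih =>
    rw [Finset.sum_insert hni]
    exact LM_add (hf _ (Finset.mem_insert_self _ _))
      (ih fun i hi => hf i (Finset.mem_insert_of_mem hi))

lemma LM_mul_eq_zero (hm : 2 ≤ m) {M N : Matrix (Fin m) (Fin m) ℤ}
    (hM : LM M) (hN : LM N) : M * N = 0 := by
  ext a b
  rw [Matrix.mul_apply, Matrix.zero_apply]
  apply Finset.sum_eq_zero
  intro c _
  by_contra h
  have h1 : M a c ≠ 0 := fun h' => h (by rw [h', zero_mul])
  have h2 : N c b ≠ 0 := fun h' => h (by rw [h', mul_zero])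
  have := hM a c h1
  have := hN c b h2
  have := two_c0 hm
  have : (b : ℕ) < m := b.isLt
  omega

lemma LM_conj (hm : 2 ≤ m) {A A' M : Matrix (Fin m) (Fin m) ℤ}
    (hA : ∀ i j : Fin m, j < i → A i j = 0) (hA' : ∀ i j : Fin m, j < i → A' i j = 0)
    (hM : LM M) : LM (A * M * A') := by
  intro a b h
  by_contra hc
  apply h
  rw [Matrix.mul_apply]
  apply Finset.sum_eq_zero
  intro v _
  rcases eq_or_ne ((A * M) a v) 0 with h1 | h1
  · rw [h1, zero_mul]
  · have hvb : ¬ v ≤ b → A' v b = 0 := fun hv => hA' v b (by omega)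
    rcases le_or_gt v b with hvb' | hvb'
    · exfalso
      rw [Matrix.mul_apply] at h1
      obtain ⟨u, _, hu⟩ := Finset.exists_ne_zero_of_sum_ne_zero h1
      have h2 : A a u ≠ 0 := fun h' => hu (by rw [h', zero_mul])
      have h3 : M u v ≠ 0 := fun h' => hu (by rw [h', mul_zero])
      have h4 : ¬ u < a := fun hlt => h2 (hA a u hlt)
      have := hM u v h3
      have : (a:ℕ) ≤ u := by omega
      omega
    · rw [hA' v b hvb', mul_zero]

end LMUT
namespace LMUT

open Matrix

variable {m n : ℕ}

/-- partial sums of superdiagonal lengths -/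
def Sf (m g : ℕ) : ℕ := ∑ ℓ ∈ Finset.Ico 1 g, (m - ℓ)

lemma Sf_succ {g : ℕ} (hg : 1 ≤ g) : Sf m (g + 1) = Sf m g + (m - g) := by
  unfold Sf
  rw [Finset.sum_Ico_succ_top hg]

lemma Sf_mono {g g' : ℕ} (h : g ≤ g') : Sf m g ≤ Sf m g' :=
  Finset.sum_le_sum_of_subset (Finset.Ico_subset_Ico le_rfl h)

lemma pear_le (p : Pears m) : (p.1.2 : ℕ) ≤ m - 1 := by
  have := p.1.2.isLt; omega

lemma gp_le (p : Pears m) : gp p ≤ m - 1 := by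
  have := gp_add p; have := pear_le p; omega

section Pos

variable (pos : Pears m → Fin n)
  (hpos : ∀ p : Pears m, (pos p : ℕ) =
      (p.1.1 : ℕ) + ∑ ℓ ∈ Finset.Ico 1 ((p.1.2 : ℕ) - (p.1.1 : ℕ)), (m - ℓ))

include hpos

lemma pos_eq (p : Pears m) : (pos p : ℕ) = (p.1.1 : ℕ) + Sf m (gp p) := hpos p

lemma pos_lt_Sf (hm : 2 ≤ m) (p : Pears m) : (pos p : ℕ) < Sf m (gp p + 1) := by
  rw [pos_eq pos hpos, Sf_succ (gp_pos p)]
  have h1 := gp_add p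
  have h2 := pear_le p
  have hm1 : 1 ≤ m := by omega
  omega

lemma pos_inj (hm : 2 ≤ m) : Function.Injective pos := by
  intro p p' h
  have key : ∀ q q' : Pears m, pos q = pos q' → gp q ≤ gp q' → q = q' := by
    intro q q' hqq hg
    have hgg : gp q = gp q' := by
      by_contra hne
      have hlt : gp q + 1 ≤ gp q' := by omega
      have := pos_lt_Sf pos hpos hm q
      have h2 : Sf m (gp q + 1) ≤ Sf m (gp q') := Sf_mono hlt
      have h3 : Sf m (gp q') ≤ (pos q' : ℕ) := by rw [pos_eq pos hpos]; omega
      rw [hqq] at this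
      omega
    have e1 := pos_eq pos hpos q
    have e2 := pos_eq pos hpos q'
    rw [hqq, hgg] at e1
    have hi : (q.1.1 : ℕ) = (q'.1.1 : ℕ) := by omega
    have hj : (q.1.2 : ℕ) = (q'.1.2 : ℕ) := by
      have := gp_add q; have := gp_add q'; omega
    apply Subtype.ext
    apply Prod.ext <;> [exact Fin.ext hi; exact Fin.ext hj]
  rcases le_total (gp p) (gp p') with hg | hg
  · exact key p p' h hg
  · exact (key p' p h.symm hg).symm

omit hpos in
lemma card_pears : Fintype.card (Pears m) = m * (m - 1) / 2 := by
  classical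
  let e : Pears m ≃ Σ j : Fin m, Fin (j : ℕ) :=
    { toFun := fun p => ⟨p.1.2, ⟨(p.1.1 : ℕ), p.2⟩⟩
      invFun := fun s => ⟨(⟨(s.2 : ℕ), lt_trans s.2.isLt s.1.isLt⟩, s.1), s.2.isLt⟩
      left_inv := fun p => by
        apply Subtype.ext
        apply Prod.ext
        · apply Fin.ext; rfl
        · rfl
      right_inv := fun s => by
        rcases s with ⟨j, i⟩
        simp }
  rw [Fintype.card_congr e, Fintype.card_sigma]
  simp only [Fintype.card_fin]
  rw [Fin.sum_univ_eq_sum_range (fun i => i) m, Finset.sum_range_id]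

lemma pos_bij (hm : 2 ≤ m) (hn : n = m * (m - 1) / 2) : Function.Bijective pos := by
  rw [Fintype.bijective_iff_injective_and_card]
  exact ⟨pos_inj pos hpos hm, by rw [card_pears (m := m), Fintype.card_fin, hn]⟩

end Pos

/-- powers of transvections -/
lemma sUT_zpow {i j : Fin m} (hij : i < j) (z : ℤ) :
    mval ((sUT i j hij) ^ z) = Matrix.transvection i j z := by
  have hne : i ≠ j := ne_of_lt hij
  have base : mval (sUT i j hij) = Matrix.transvection i j 1 := rfl
  induction z using Int.induction_on with
  | zero =>
    rw [zpow_zero, mval_one, Matrix.transvection_zero]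
  | succ k ih =>
    have : (sUT i j hij) ^ ((k : ℤ) + 1) = (sUT i j hij) ^ (k : ℤ) * sUT i j hij :=
      zpow_add_one _ _
    rw [this, mval_mul, ih, base, Matrix.transvection_mul_transvection_same _ _ hne]
  | pred k ih =>
    have key : (sUT i j hij) ^ (-(k : ℤ) - 1) = (sUT i j hij) ^ (-(k : ℤ)) * (sUT i j hij)⁻¹ :=
      _root_.zpow_sub_one _ _
    have hinv : mval ((sUT i j hij)⁻¹) = Matrix.transvection i j (-1) := rfl
    rw [key, mval_mul, ih, hinv, Matrix.transvection_mul_transvection_same _ _ hne]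
    have : (-(k:ℤ)) + -1 = -(k:ℤ) - 1 := by ring
    rw [this]

lemma transvection_eq_add_smul (i j : Fin m) (z : ℤ) :
    Matrix.transvection i j z = 1 + z • Matrix.single i j (1 : ℤ) := by
  rw [Matrix.transvection, Matrix.smul_single, smul_eq_mul, mul_one]

/-- ordered product over a list of indices -/
def PL (a : Fin n → ↥(UT m)) (L : List (Fin n)) (x : Fin n → ℤ) : ↥(UT m) :=
  (L.map fun j => a j ^ x j).prod

lemma PL_nil (a : Fin n → ↥(UT m)) (x : Fin n → ℤ) : PL a [] x = 1 := rfl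

lemma PL_cons (a : Fin n → ↥(UT m)) (j : Fin n) (L : List (Fin n)) (x : Fin n → ℤ) :
    PL a (j :: L) x = a j ^ x j * PL a L x := by
  unfold PL
  rw [List.map_cons, List.prod_cons]

lemma PL_append (a : Fin n → ↥(UT m)) (L L' : List (Fin n)) (x : Fin n → ℤ) :
    PL a (L ++ L') x = PL a L x * PL a L' x := by
  unfold PL
  rw [List.map_append, List.prod_append]

lemma PL_congr (a : Fin n → ↥(UT m)) (L : List (Fin n)) {x x' : Fin n → ℤ}
    (h : ∀ j ∈ L, x j = x' j) : PL a L x = PL a L x' := by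
  unfold PL
  congr 1
  apply List.map_congr_left
  intro j hj
  rw [h j hj]

lemma malcevProd_eq_PL (a : Fin n → ↥(UT m)) (x : Fin n → ℤ) :
    malcevProd a x = PL a (List.finRange n) x := rfl

end LMUT
namespace LMUT

open Matrix

variable {m n : ℕ}

section Ctx

variable (pos : Pears m → Fin n) (hb : Function.Bijective pos)

/-- inverse of `pos` -/
noncomputable def pearOf (j : Fin n) : Pears m := (Equiv.ofBijective pos hb).symm j

lemma pos_pearOf (j : Fin n) : pos (pearOf pos hb j) = j :=
  (Equiv.ofBijective pos hb).apply_symm_apply j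

lemma pearOf_pos (p : Pears m) : pearOf pos hb (pos p) = p :=
  (Equiv.ofBijective pos hb).symm_apply_apply p

variable (hpos : ∀ p : Pears m, (pos p : ℕ) =
      (p.1.1 : ℕ) + ∑ ℓ ∈ Finset.Ico 1 ((p.1.2 : ℕ) - (p.1.1 : ℕ)), (m - ℓ))

include hpos

lemma long_iff_pos (hm : 2 ≤ m) (p : Pears m) :
    c0 m ≤ gp p ↔ Sf m (c0 m) ≤ (pos p : ℕ) := by
  constructor
  · intro h
    calc Sf m (c0 m) ≤ Sf m (gp p) := Sf_mono h
    _ ≤ (pos p : ℕ) := by rw [pos_eq pos hpos]; omega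
  · intro h
    by_contra hc
    have h1 : gp p + 1 ≤ c0 m := by omega
    have := pos_lt_Sf pos hpos hm p
    have := Sf_mono (m := m) h1
    omega

lemma long_iff (hm : 2 ≤ m) (j : Fin n) :
    c0 m ≤ gp (pearOf pos hb j) ↔ Sf m (c0 m) ≤ (j : ℕ) := by
  rw [long_iff_pos pos hpos hm, pos_pearOf pos hb]

end Ctx

lemma mem_take_finRange (n₀ : ℕ) (j : Fin n) :
    j ∈ (List.finRange n).take n₀ ↔ (j : ℕ) < n₀ := by
  rw [List.mem_take_iff_getElem]
  constructor
  · rintro ⟨i, hi, rfl⟩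
    simp only [List.getElem_finRange]
    simp only [List.length_finRange] at hi
    simpa using (lt_min_iff.mp hi).1
  · intro hj
    refine ⟨(j : ℕ), ?_, ?_⟩
    · simp only [List.length_finRange, lt_min_iff]
      exact ⟨hj, j.isLt⟩
    · simp only [List.getElem_finRange]
      exact Fin.ext (by simp)

lemma mem_drop_finRange (n₀ : ℕ) (j : Fin n) :
    j ∈ (List.finRange n).drop n₀ ↔ n₀ ≤ (j : ℕ) := by
  rw [List.mem_drop_iff_getElem]
  constructor
  · rintro ⟨i, hi, rfl⟩
    simp only [List.getElem_finRange]
    simp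
  · intro hj
    refine ⟨(j : ℕ) - n₀, ?_, ?_⟩
    · simp only [List.length_finRange]
      omega
    · have h1 : n₀ + ((j : ℕ) - n₀) = (j : ℕ) := by omega
      simp only [List.getElem_finRange]
      exact Fin.ext (by simp [h1])

end LMUT
namespace LMUT

open Matrix

variable {m n : ℕ}

section Ctx2

variable (pos : Pears m → Fin n) (hb : Function.Bijective pos)
  (a : Fin n → ↥(UT m)) (ha : ∀ p : Pears m, a (pos p) = sUT p.1.1 p.1.2 p.2)

include ha

lemma a_eq (j : Fin n) :
    a j = sUT (pearOf pos hb j).1.1 (pearOf pos hb j).1.2 (pearOf pos hb j).2 := by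
  conv_lhs => rw [← pos_pearOf pos hb j]
  exact ha _

lemma mval_a_zpow (j : Fin n) (z : ℤ) :
    mval (a j ^ z) = 1 + z • Bq (pearOf pos hb j) := by
  rw [a_eq pos hb a ha j]
  have : ((sUT (pearOf pos hb j).1.1 (pearOf pos hb j).1.2 (pearOf pos hb j).2) ^ z) =
      (sUT (pearOf pos hb j).1.1 (pearOf pos hb j).1.2 (pearOf pos hb j).2) ^ z := rfl
  rw [sUT_zpow (pearOf pos hb j).2 z, transvection_eq_add_smul]
  rfl

/-- product of long transvections -/
lemma tail_prod (hm : 2 ≤ m) (x : Fin n → ℤ) :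
    ∀ L : List (Fin n), (∀ j ∈ L, c0 m ≤ gp (pearOf pos hb j)) →
      mval (PL a L x) = 1 + (L.map fun j => x j • Bq (pearOf pos hb j)).sum ∧
        LM ((L.map fun j => x j • Bq (pearOf pos hb j)).sum) := by
  intro L
  induction L with
  | nil =>
    intro _
    constructor
    · simp [PL_nil, mval_one]
    · simpa using LM_zero
  | cons j L ih =>
    intro hL
    have hj : c0 m ≤ gp (pearOf pos hb j) := hL j (List.mem_cons_self)
    obtain ⟨ihP, ihLM⟩ := ih (fun j' hj' => hL j' (List.mem_cons_of_mem j hj'))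
    have hBj : LM ((x j) • Bq (pearOf pos hb j)) := LM_smul (LM_Bq hj) (x j)
    constructor
    · rw [PL_cons, mval_mul, mval_a_zpow pos hb a ha, ihP]
      rw [List.map_cons, List.sum_cons]
      have hz : ((x j) • Bq (pearOf pos hb j)) *
          ((L.map fun j' => x j' • Bq (pearOf pos hb j')).sum) = 0 :=
        LM_mul_eq_zero hm hBj ihLM
      rw [mul_add, add_mul, add_mul, one_mul, mul_one, hz]
      rw [one_mul]
      abel
    · rw [List.map_cons, List.sum_cons]
      exact LM_add hBj ihLM

end Ctx2

lemma toFinset_drop_finRange (n₀ : ℕ) :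
    ((List.finRange n).drop n₀).toFinset =
      Finset.univ.filter (fun j : Fin n => n₀ ≤ (j : ℕ)) := by
  ext j
  rw [List.mem_toFinset, mem_drop_finRange, Finset.mem_filter]
  simp

lemma nodup_drop_finRange (n₀ : ℕ) : ((List.finRange n).drop n₀).Nodup :=
  (List.drop_sublist n₀ _).nodup (List.nodup_finRange n)

/-- list sum to Finset sum for matrices -/
lemma drop_sum_eq (n₀ : ℕ) (f : Fin n → Matrix (Fin m) (Fin m) ℤ) :
    (((List.finRange n).drop n₀).map f).sum =
      ∑ j ∈ Finset.univ.filter (fun j : Fin n => n₀ ≤ (j : ℕ)), f j := by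
  rw [← toFinset_drop_finRange, List.sum_toFinset f (nodup_drop_finRange n₀)]

end LMUT
namespace LMUT

open Matrix MvPolynomial

variable {m n : ℕ}

/-- coordinates as rational input -/
def xc (pos : Pears m → Fin n) (x : Fin n → ℤ) : Pears m → ℚ := fun p => ((x (pos p) : ℤ) : ℚ)

section Ctx3

variable (pos : Pears m → Fin n) (hb : Function.Bijective pos)
  (a : Fin n → ↥(UT m)) (ha : ∀ p : Pears m, a (pos p) = sUT p.1.1 p.1.2 p.2)

include hb ha

lemma mval_a_zpow_tv (j : Fin n) (z : ℤ) :
    mval (a j ^ z) =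
      Matrix.transvection (pearOf pos hb j).1.1 (pearOf pos hb j).1.2 z := by
  rw [a_eq pos hb a ha j, sUT_zpow (pearOf pos hb j).2 z]

lemma ENT :
    ∀ L : List (Fin n), L.Nodup → ∀ q : Pears m,
      ∃ B : MvPolynomial (Pears m) ℚ,
        (∀ p' ∈ B.vars, gp p' < gp q) ∧
        ∀ x : Fin n → ℤ,
          ((mval (PL a L x) q.1.1 q.1.2 : ℤ) : ℚ) =
            (if pos q ∈ L then ((x (pos q) : ℤ) : ℚ) else 0) +
              MvPolynomial.eval (xc pos x) B := by
  intro L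
  induction L with
  | nil =>
    intro _ q
    refine ⟨0, by simp, fun x => ?_⟩
    rw [PL_nil, mval_one, Matrix.one_apply_ne (ne_of_lt q.2)]
    simp
  | cons j L ih =>
    intro hnd q
    obtain ⟨hj_notmem, hndL⟩ := List.nodup_cons.mp hnd
    choose Bs hvars heval using ih hndL
    set q0 := pearOf pos hb j with hq0
    have hposq0 : pos q0 = j := pos_pearOf pos hb j
    have key : ∀ x : Fin n → ℤ, mval (PL a (j :: L) x) q.1.1 q.1.2 =
        (if q0.1.1 = q.1.1 then
          mval (PL a L x) q.1.1 q.1.2 + x j * mval (PL a L x) q0.1.2 q.1.2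
        else mval (PL a L x) q.1.1 q.1.2) := by
      intro x
      rw [PL_cons, mval_mul, mval_a_zpow_tv pos hb a ha]
      by_cases hcase : q0.1.1 = q.1.1
      · rw [if_pos hcase, ← hcase, Matrix.transvection_mul_apply_same]
      · rw [if_neg hcase, Matrix.transvection_mul_apply_of_ne _ _ _ _ (Ne.symm hcase)]
    by_cases hcase : q0.1.1 = q.1.1
    · rcases lt_trichotomy q0.1.2 q.1.2 with hlt | heq | hgt
      · -- extra term with pear r = (q0.2, q.2)
        set r : Pears m := ⟨(q0.1.2, q.1.2), hlt⟩ with hr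
        refine ⟨Bs q + X q0 * ((if pos r ∈ L then X r else 0) + Bs r), ?_, ?_⟩
        · intro p' hp'
          have h1 := vars_add_subset (Bs q) (X q0 * ((if pos r ∈ L then X r else 0) + Bs r)) hp'
          have hgq0 : gp q0 < gp q := by
            have h1 := q0.2; have h2 := q.2; have h3 := hlt
            simp only [gp]
            have e1 : (q0.1.1 : ℕ) = (q.1.1 : ℕ) := by rw [hcase]
            have : (q0.1.2 : ℕ) < (q.1.2 : ℕ) := h3
            have : (q0.1.1 : ℕ) < (q0.1.2 : ℕ) := h1
            omega
          have hgr : gp r < gp q := by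
            have h1 := q0.2
            simp only [gp, hr]
            have e1 : (q0.1.1 : ℕ) = (q.1.1 : ℕ) := by rw [hcase]
            have : (q0.1.1 : ℕ) < (q0.1.2 : ℕ) := h1
            have : (q0.1.2 : ℕ) < (q.1.2 : ℕ) := hlt
            omega
          rcases Finset.mem_union.mp h1 with h2 | h2
          · exact hvars q p' h2
          · have h3 := vars_mul _ _ h2
            rcases Finset.mem_union.mp h3 with h4 | h4
            · rw [vars_X] at h4
              rw [Finset.mem_singleton.mp h4]
              exact hgq0
            · have h5 := vars_add_subset _ _ h4
              rcases Finset.mem_union.mp h5 with h6 | h6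
              · by_cases hmem : pos r ∈ L
                · rw [if_pos hmem, vars_X] at h6
                  rw [Finset.mem_singleton.mp h6]
                  exact hgr
                · rw [if_neg hmem] at h6
                  simp at h6
              · exact lt_trans (hvars r p' h6) hgr
        · intro x
          rw [key x, if_pos hcase]
          have hqne : pos q ≠ j := by
            rw [← hposq0]
            intro hc
            have := hb.1 hc
            apply ne_of_lt hlt
            rw [this]
          have hmemiff : (pos q ∈ j :: L) ↔ (pos q ∈ L) := by
            rw [List.mem_cons]
            exact or_iff_right hqne
          push_cast
          rw [heval q x]
          have hrq : ((mval (PL a L x) q0.1.2 q.1.2 : ℤ) : ℚ) =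
              (if pos r ∈ L then ((x (pos r) : ℤ) : ℚ) else 0) +
                MvPolynomial.eval (xc pos x) (Bs r) := heval r x
          rw [map_add, _root_.map_mul, eval_X]
          have hevq0 : xc pos x q0 = ((x j : ℤ) : ℚ) := by
            simp only [xc, hposq0]
          rw [hevq0, map_add]
          have hif : MvPolynomial.eval (xc pos x) (if pos r ∈ L then (X r : MvPolynomial (Pears m) ℚ) else 0) =
              (if pos r ∈ L then ((x (pos r) : ℤ) : ℚ) else 0) := by
            by_cases hmem : pos r ∈ L
            · rw [if_pos hmem, if_pos hmem, eval_X]; rfl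
            · rw [if_neg hmem, if_neg hmem, map_zero]
          rw [hif, ← hrq]
          rw [if_congr hmemiff rfl rfl]
          push_cast
          ring
      · -- q0 = q : leading term
        have hq0q : q0 = q := by
          apply Subtype.ext
          apply Prod.ext
          · exact hcase
          · exact heq
        refine ⟨Bs q, fun p' hp' => hvars q p' hp', fun x => ?_⟩
        rw [key x, if_pos hcase, heq, mval_diag, mul_one]
        have hjq : j = pos q := by rw [← hposq0, hq0q]
        have hmem1 : pos q ∈ j :: L := by rw [← hjq]; exact List.mem_cons_self
        have hmem2 : pos q ∉ L := by rw [← hjq]; exact hj_notmem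
        rw [if_pos hmem1]
        push_cast
        rw [heval q x, if_neg hmem2, hjq]
        push_cast
        ring
      · -- below diagonal: zero
        refine ⟨Bs q, fun p' hp' => hvars q p' hp', fun x => ?_⟩
        rw [key x, if_pos hcase, mval_upper _ _ _ hgt, mul_zero, add_zero]
        have hqne : pos q ≠ j := by
          rw [← hposq0]
          intro hc
          have := hb.1 hc
          apply ne_of_lt hgt
          rw [this]
        have hmemiff : (pos q ∈ j :: L) ↔ (pos q ∈ L) := by
          rw [List.mem_cons]; exact or_iff_right hqne
        rw [if_congr hmemiff rfl rfl]
        exact heval q x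
    · refine ⟨Bs q, fun p' hp' => hvars q p' hp', fun x => ?_⟩
      rw [key x, if_neg hcase]
      have hqne : pos q ≠ j := by
        rw [← hposq0]
        intro hc
        have := hb.1 hc
        apply hcase
        rw [this]
      have hmemiff : (pos q ∈ j :: L) ↔ (pos q ∈ L) := by
        rw [List.mem_cons]; exact or_iff_right hqne
      rw [if_congr hmemiff rfl rfl]
      exact heval q x

end Ctx3

end LMUT
namespace LMUT

open Matrix MvPolynomial

variable {m n : ℕ}

/-- entries of a matrix as rational input -/
def ec (h : ↥(UT m)) : Pears m → ℚ := fun p => ((mval h p.1.1 p.1.2 : ℤ) : ℚ)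

lemma eval_aeval {σ τ : Type*} (f : σ → MvPolynomial τ ℚ) (g : τ → ℚ)
    (p : MvPolynomial σ ℚ) :
    MvPolynomial.eval g (MvPolynomial.aeval f p) =
      MvPolynomial.eval (fun i => MvPolynomial.eval g (f i)) p := by
  show MvPolynomial.eval₂Hom (RingHom.id ℚ) g (MvPolynomial.bind₁ f p) = _
  rw [MvPolynomial.eval₂Hom_bind₁]
  rfl

lemma eval_congr_vars {σ : Type*} [DecidableEq σ] {g₁ g₂ : σ → ℚ} {p : MvPolynomial σ ℚ}
    (h : ∀ i ∈ p.vars, g₁ i = g₂ i) :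
    MvPolynomial.eval g₁ p = MvPolynomial.eval g₂ p := by
  have := MvPolynomial.eval₂Hom_congr' (f₁ := RingHom.id ℚ) (f₂ := RingHom.id ℚ)
    (g₁ := g₁) (g₂ := g₂) (p₁ := p) (p₂ := p) rfl (fun i hi _ => h i hi) rfl
  exact this

section Ctx4

variable (pos : Pears m → Fin n) (hb : Function.Bijective pos)
  (a : Fin n → ↥(UT m)) (ha : ∀ p : Pears m, a (pos p) = sUT p.1.1 p.1.2 p.2)
  (t : Fin n → ↥(UT m) → ℚ)
  (ht : ∀ (x : Fin n → ℤ) (k : Fin n), t k (malcevProd a x) = (x k : ℚ))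
  (hsur : Function.Surjective (malcevProd a))

include hb ha ht hsur

lemma INV : ∀ q : Pears m, ∃ T : MvPolynomial (Pears m) ℚ,
    ∀ h : ↥(UT m), t (pos q) h = MvPolynomial.eval (ec h) T := by
  have main : ∀ d : ℕ, ∀ q : Pears m, gp q < d → ∃ T : MvPolynomial (Pears m) ℚ,
      ∀ h : ↥(UT m), t (pos q) h = MvPolynomial.eval (ec h) T := by
    intro d
    induction d with
    | zero => intro q hq; omega
    | succ d ihd =>
      choose Tf hTf using ihd
      intro q hq
      by_cases hd : gp q < d
      · exact ⟨Tf q hd, hTf q hd⟩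
      · have hqd : gp q = d := by omega
        obtain ⟨B, hBvars, hBeval⟩ := ENT pos hb a ha (List.finRange n) (List.nodup_finRange n) q
        refine ⟨X q - MvPolynomial.aeval
          (fun p => if h' : gp p < d then Tf p h' else X p) B, fun h => ?_⟩
        obtain ⟨x, hx⟩ := hsur h
        have h1 : t (pos q) h = ((x (pos q) : ℤ) : ℚ) := by rw [← hx, ht]
        rw [h1, map_sub, eval_X, eval_aeval]
        have h2 : MvPolynomial.eval
            (fun i => MvPolynomial.eval (ec h) (if h' : gp i < d then Tf i h' else X i)) B =
            MvPolynomial.eval (xc pos x) B := by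
          apply eval_congr_vars
          intro i hi
          have hgi : gp i < d := by
            have := hBvars i hi; omega
          rw [dif_pos hgi, ← hTf i hgi h, ← hx, ht]
          rfl
        rw [h2]
        have h3 : ec h q = ((x (pos q) : ℤ) : ℚ) + MvPolynomial.eval (xc pos x) B := by
          have := hBeval x
          rw [if_pos (List.mem_finRange (pos q))] at this
          rw [ec, ← hx]
          exact this
        rw [h3]
        ring
  intro q
  exact main (gp q + 1) q (by omega)

end Ctx4

end LMUT
namespace LMUT

open Matrix MvPolynomial

variable {m n : ℕ}

section Ctx5

variable (pos : Pears m → Fin n) (hb : Function.Bijective pos)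
  (hpos : ∀ p : Pears m, (pos p : ℕ) =
      (p.1.1 : ℕ) + ∑ ℓ ∈ Finset.Ico 1 ((p.1.2 : ℕ) - (p.1.1 : ℕ)), (m - ℓ))
  (a : Fin n → ↥(UT m)) (ha : ∀ p : Pears m, a (pos p) = sUT p.1.1 p.1.2 p.2)
  (t : Fin n → ↥(UT m) → ℚ)
  (ht : ∀ (x : Fin n → ℤ) (k : Fin n), t k (malcevProd a x) = (x k : ℚ))
  (hsur : Function.Surjective (malcevProd a))
  (hm : 2 ≤ m)

include hb hpos ha hm

/-- LM matrices as sums of elementary long matrices -/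
lemma LM_decomp {M' : Matrix (Fin m) (Fin m) ℤ} (hM' : LM M') :
    ∑ j ∈ Finset.univ.filter (fun j : Fin n => Sf m (c0 m) ≤ (j : ℕ)),
      (M' (pearOf pos hb j).1.1 (pearOf pos hb j).1.2) • Bq (pearOf pos hb j) = M' := by
  ext u v
  rw [Matrix.sum_apply]
  by_cases hab : ∃ huv : u < v, c0 m ≤ (v : ℕ) - (u : ℕ)
  · obtain ⟨huv, hlong⟩ := hab
    set r : Pears m := ⟨(u, v), huv⟩ with hrdef
    have hrlong : c0 m ≤ gp r := hlong
    have hmem : pos r ∈ Finset.univ.filter (fun j : Fin n => Sf m (c0 m) ≤ (j : ℕ)) := by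
      rw [Finset.mem_filter]
      exact ⟨Finset.mem_univ _, (long_iff_pos pos hpos hm r).mp hrlong⟩
    rw [Finset.sum_eq_single (pos r)]
    · rw [pearOf_pos pos hb r]
      simp [Bq, Matrix.single, hrdef]
    · intro j _ hjne
      simp only [Matrix.smul_apply, Bq, Matrix.single, Matrix.of_apply]
      rw [if_neg, smul_zero]
      rintro ⟨h1, h2⟩
      apply hjne
      have : pearOf pos hb j = r := by
        apply Subtype.ext
        apply Prod.ext <;> [exact h1; exact h2]
      rw [← this, pos_pearOf pos hb]
    · intro hnm
      exact absurd hmem hnm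
  · have hz : M' u v = 0 := by
      by_contra hne
      have h1 := hM' u v hne
      have hc := c0_pos hm
      exact hab ⟨by omega, by omega⟩
    rw [hz]
    apply Finset.sum_eq_zero
    intro j hj
    simp only [Matrix.smul_apply, Bq, Matrix.single, Matrix.of_apply]
    rw [Finset.mem_filter] at hj
    by_cases hcond : (pearOf pos hb j).1.1 = u ∧ (pearOf pos hb j).1.2 = v
    · exfalso
      apply hab
      have hlong : c0 m ≤ gp (pearOf pos hb j) := (long_iff pos hb hpos hm j).mpr hj.2
      have h1 := (pearOf pos hb j).2
      rw [hcond.1, hcond.2] at h1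
      have h2 := gp_add (pearOf pos hb j)
      rw [hcond.1, hcond.2] at h2
      refine ⟨h1, ?_⟩
      simp only [gp] at hlong
      rw [hcond.1, hcond.2] at hlong
      exact hlong
    · rw [if_neg hcond, smul_zero]

include ht hsur

/-- coordinates of a product with a long element -/
lemma ADD (w ξ : ↥(UT m)) (M' : Matrix (Fin m) (Fin m) ℤ)
    (hξ : mval ξ = 1 + M') (hM' : LM M') (k : Fin n) :
    t k (w * ξ) = t k w +
      ((M' (pearOf pos hb k).1.1 (pearOf pos hb k).1.2 : ℤ) : ℚ) := by
  obtain ⟨y, hy⟩ := hsur w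
  set n₀ := Sf m (c0 m) with hn₀
  set L1 := (List.finRange n).take n₀ with hL1
  set L2 := (List.finRange n).drop n₀ with hL2
  set δ : Fin n → ℤ := fun j => M' (pearOf pos hb j).1.1 (pearOf pos hb j).1.2 with hδ
  set y' : Fin n → ℤ := fun j => y j + δ j with hy'
  have hsplit : ∀ z : Fin n → ℤ, malcevProd a z = PL a L1 z * PL a L2 z := by
    intro z
    rw [malcevProd_eq_PL, ← PL_append]
    rw [hL1, hL2, List.take_append_drop]
  have hlongL2 : ∀ j ∈ L2, c0 m ≤ gp (pearOf pos hb j) := by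
    intro j hj
    rw [hL2, mem_drop_finRange] at hj
    exact (long_iff pos hb hpos hm j).mpr hj
  have hshortδ : ∀ j ∈ L1, δ j = 0 := by
    intro j hj
    rw [hL1, mem_take_finRange] at hj
    have hshort : ¬ c0 m ≤ gp (pearOf pos hb j) := by
      rw [long_iff pos hb hpos hm j]
      omega
    by_contra hne
    apply hshort
    have h1 := hM' _ _ hne
    have h2 := gp_add (pearOf pos hb j)
    simp only [gp]
    omega
  have hhead : PL a L1 y' = PL a L1 y := by
    apply PL_congr
    intro j hj
    rw [hy']
    simp only
    rw [hshortδ j hj, add_zero]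
  obtain ⟨htp_y, hLM_y⟩ := tail_prod (pos := pos) (hb := hb) (a := a) (ha := ha) (hm := hm) (x := y) L2 hlongL2
  obtain ⟨htp_y', hLM_y'⟩ := tail_prod (pos := pos) (hb := hb) (a := a) (ha := ha) (hm := hm) (x := y') L2 hlongL2
  set F2 := Finset.univ.filter (fun j : Fin n => n₀ ≤ (j : ℕ)) with hF2
  have hsum_conv : ∀ z : Fin n → ℤ,
      ((L2.map fun j => z j • Bq (pearOf pos hb j)).sum) =
        ∑ j ∈ F2, z j • Bq (pearOf pos hb j) := by
    intro z
    rw [hL2, drop_sum_eq]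
  have hMy' : ((L2.map fun j => y' j • Bq (pearOf pos hb j)).sum) =
      ((L2.map fun j => y j • Bq (pearOf pos hb j)).sum) + M' := by
    rw [hsum_conv, hsum_conv]
    rw [← LM_decomp (pos := pos) (hb := hb) (hpos := hpos) (a := a) (ha := ha) (hm := hm) (hM' := hM')]
    rw [← Finset.sum_add_distrib]
    apply Finset.sum_congr rfl
    intro j _
    rw [hy']
    simp only
    rw [add_smul]
  set My := ((L2.map fun j => y j • Bq (pearOf pos hb j)).sum) with hMy
  have hprod_eq : malcevProd a y' = w * ξ := by
    apply mval_injective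
    rw [hsplit y', mval_mul, hhead, htp_y', hMy']
    rw [← hy, hsplit y, mval_mul, mval_mul, htp_y, hξ]
    rw [mul_assoc]
    congr 1
    have hz : My * M' = 0 := LM_mul_eq_zero hm hLM_y hM'
    rw [mul_add, add_mul, add_mul, one_mul, mul_one, one_mul, hz]
    abel
  have h1 : t k (w * ξ) = (y' k : ℚ) := by rw [← hprod_eq, ht]
  have h2 : t k w = (y k : ℚ) := by rw [← hy, ht]
  rw [h1, h2, hy']
  simp only [hδ]
  push_cast
  ring

end Ctx5

end LMUT
namespace LMUT

open Matrix MvPolynomial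

variable {m n : ℕ}

/-- short pairs -/
abbrev Sh (m : ℕ) := {p : Pears m // gp p < c0 m}

/-- short coordinates as rational input -/
def ev (pos : Pears m → Fin n) (x : Fin n → ℤ) : Sh m → ℚ :=
  fun s => ((x (pos s.1) : ℤ) : ℚ)

lemma map_one_rq {R S : Type*} [CommRing R] [CommRing S] (f : R →+* S) :
    (1 : Matrix (Fin m) (Fin m) R).map f = 1 :=
  Matrix.map_one f (map_zero f) (map_one f)

lemma map_stdBasis {R S : Type*} [CommRing R] [CommRing S] (f : R →+* S)
    (i j : Fin m) (c : R) :
    (Matrix.single i j c).map f = Matrix.single i j (f c) := by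
  ext u v
  simp only [Matrix.map_apply, Matrix.single, Matrix.of_apply]
  by_cases h : i = u ∧ j = v
  · rw [if_pos h, if_pos h]
  · rw [if_neg h, if_neg h, map_zero]

lemma map_tv_poly {R S : Type*} [CommRing R] [CommRing S] (f : R →+* S)
    (i j : Fin m) (c : R) :
    (1 + Matrix.single i j c).map f = 1 + Matrix.single i j (f c) := by
  rw [Matrix.map_add _ (fun x y => map_add f x y), map_one_rq, map_stdBasis]

lemma map_mul_cast (A B : Matrix (Fin m) (Fin m) ℤ) :
    (A * B).map (fun z : ℤ => (z : ℚ)) =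
      A.map (fun z : ℤ => (z : ℚ)) * B.map (fun z : ℤ => (z : ℚ)) :=
  Matrix.map_mul (f := Int.castRingHom ℚ)

lemma map_one_cast : (1 : Matrix (Fin m) (Fin m) ℤ).map (fun z : ℤ => (z : ℚ)) = 1 :=
  map_one_rq (Int.castRingHom ℚ)

lemma map_tv_cast (i j : Fin m) (c : ℤ) :
    (1 + Matrix.single i j c).map (fun z : ℤ => (z : ℚ)) =
      1 + Matrix.single i j ((c : ℚ)) :=
  map_tv_poly (Int.castRingHom ℚ) i j c

section Ctx6

variable (pos : Pears m → Fin n) (hb : Function.Bijective pos)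
  (a : Fin n → ↥(UT m)) (ha : ∀ p : Pears m, a (pos p) = sUT p.1.1 p.1.2 p.2)

include hb ha

lemma HEAD0 (L : List (Fin n)) (hL : ∀ j ∈ L, gp (pearOf pos hb j) < c0 m) :
    ∃ W : Matrix (Fin m) (Fin m) (MvPolynomial (Sh m) ℚ),
      ∀ x : Fin n → ℤ,
        (mval (PL a L x)).map (fun z : ℤ => (z : ℚ)) =
          W.map (MvPolynomial.eval (ev pos x)) := by
  induction L with
  | nil =>
    refine ⟨1, fun x => ?_⟩
    rw [PL_nil, mval_one, map_one_cast, map_one_rq (MvPolynomial.eval (ev pos x))]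
  | cons j L ih =>
    obtain ⟨W', hW'⟩ := ih (fun j' hj' => hL j' (List.mem_cons_of_mem j hj'))
    have hjshort : gp (pearOf pos hb j) < c0 m := hL j (List.mem_cons_self)
    set s : Sh m := ⟨pearOf pos hb j, hjshort⟩ with hs
    set q0 := pearOf pos hb j with hq0
    refine ⟨(1 + Matrix.single q0.1.1 q0.1.2 (X s : MvPolynomial (Sh m) ℚ)) * W',
      fun x => ?_⟩
    rw [PL_cons, mval_mul, map_mul_cast,
      Matrix.map_mul (f := MvPolynomial.eval (ev pos x)), hW' x]
    congr 1
    rw [mval_a_zpow pos hb a ha j (x j)]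
    have h1 : (x j) • Bq q0 = Matrix.single q0.1.1 q0.1.2 (x j) := by
      rw [Bq, Matrix.smul_single, smul_eq_mul, mul_one]
    rw [h1, map_tv_cast, map_tv_poly (MvPolynomial.eval (ev pos x))]
    congr 1
    rw [eval_X]
    simp only [ev, hs, pos_pearOf pos hb j]

lemma HEAD (g : ↥(UT m)) (L : List (Fin n)) (hL : ∀ j ∈ L, gp (pearOf pos hb j) < c0 m) :
    ∃ W : Matrix (Fin m) (Fin m) (MvPolynomial (Sh m) ℚ),
      ∀ x : Fin n → ℤ,
        (mval (PL a L x * g⁻¹)).map (fun z : ℤ => (z : ℚ)) =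
          W.map (MvPolynomial.eval (ev pos x)) := by
  obtain ⟨W0, hW0⟩ := HEAD0 pos hb a ha L hL
  refine ⟨W0 * (mval g⁻¹).map (fun z : ℤ => (MvPolynomial.C (z : ℚ) : MvPolynomial (Sh m) ℚ)),
    fun x => ?_⟩
  rw [mval_mul, map_mul_cast, Matrix.map_mul (f := MvPolynomial.eval (ev pos x)), hW0 x]
  congr 1
  ext u v
  simp only [Matrix.map_apply, eval_C]

end Ctx6

end LMUT
theorem linear_monomials_UT (m : ℕ) (hm : 2 ≤ m)
    (n : ℕ) (hn : n = m * (m - 1) / 2)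
    (pos : Pears m → Fin n)
    (hpos : ∀ p : Pears m, (pos p : ℕ) =
      (p.1.1 : ℕ) + ∑ ℓ ∈ Finset.Ico 1 ((p.1.2 : ℕ) - (p.1.1 : ℕ)), (m - ℓ))
    (a : Fin n → ↥(UT m)) (ha : ∀ p : Pears m, a (pos p) = sUT p.1.1 p.1.2 p.2)
    (hmal : IsMalcevBasis a)
    (t : Fin n → ↥(UT m) → ℚ)
    (ht : ∀ (x : Fin n → ℤ) (k : Fin n), t k (malcevProd a x) = (x k : ℚ)) :
    ∀ (g : ↥(UT m)) (p : Pears m),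
      ∃ P : MvPolynomial (Pears m) ℚ,
        (∀ h : ↥(UT m), t (pos p) (h * g⁻¹) =
          MvPolynomial.eval (fun p' : Pears m => t (pos p') h) P) ∧
        ∀ d ∈ P.support,
          (∃ p' : Pears m, d p' ≠ 0 ∧ m - m / 2 ≤ (p'.1.2 : ℕ) - (p'.1.1 : ℕ)) →
          (d.sum fun _ e => e) = 1 := by
  classical
  intro g p
  open LMUT MvPolynomial in
  have hb : Function.Bijective pos := pos_bij pos hpos hm hn
  have hsur : Function.Surjective (malcevProd a) := hmal.1.2
  set k := pos p with hk
  set n₀ := Sf m (c0 m) with hn₀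
  set L1 := (List.finRange n).take n₀ with hL1
  set L2 := (List.finRange n).drop n₀ with hL2
  have hshortL1 : ∀ j ∈ L1, gp (pearOf pos hb j) < c0 m := by
    intro j hj
    rw [hL1, mem_take_finRange] at hj
    have hiff := long_iff pos hb hpos hm j
    omega
  have hlongL2 : ∀ j ∈ L2, c0 m ≤ gp (pearOf pos hb j) := by
    intro j hj
    rw [hL2, mem_drop_finRange] at hj
    exact (long_iff pos hb hpos hm j).mpr hj
  obtain ⟨T, hT⟩ := INV pos hb a ha t ht hsur p
  obtain ⟨W, hW⟩ := HEAD pos hb a ha g L1 hshortL1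
  set Q : MvPolynomial (Sh m) ℚ :=
    MvPolynomial.aeval (fun p' : Pears m => W p'.1.1 p'.1.2) T with hQ
  set A := mval g with hA
  set A' := mval g⁻¹ with hA'
  set coef : Pears m → ℚ := fun q => (((A * Bq q * A') p.1.1 p.1.2 : ℤ) : ℚ) with hcoef
  set Flong := Finset.univ.filter (fun q : Pears m => c0 m ≤ gp q) with hFlong
  set Plin : MvPolynomial (Pears m) ℚ :=
    ∑ q ∈ Flong, MvPolynomial.C (coef q) * MvPolynomial.X q with hPlin
  refine ⟨MvPolynomial.rename Subtype.val Q + Plin, ?_, ?_⟩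
  · -- evaluation identity
    intro h
    obtain ⟨x, hx⟩ := hsur h
    have hxc : ∀ p' : Pears m, t (pos p') h = xc pos x p' := by
      intro p'
      rw [← hx, ht]
      rfl
    set u := PL a L1 x with hu
    set z := PL a L2 x with hz
    have hhz : h = u * z := by
      rw [← hx, hu, hz, hL1, hL2, malcevProd_eq_PL, ← PL_append, List.take_append_drop]
    set w := u * g⁻¹ with hw
    set ξ := g * z * g⁻¹ with hξdef
    have halg : h * g⁻¹ = w * ξ := by
      rw [hhz, hw, hξdef]
      group
    obtain ⟨htp, hLM⟩ := tail_prod (pos := pos) (hb := hb) (a := a) (ha := ha)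
      (hm := hm) (x := x) L2 hlongL2
    set Mx := ((L2.map fun j => x j • Bq (pearOf pos hb j)).sum) with hMx
    set F2 := Finset.univ.filter (fun j : Fin n => n₀ ≤ (j : ℕ)) with hF2
    have hMxF : Mx = ∑ j ∈ F2, x j • Bq (pearOf pos hb j) := by
      rw [hMx, hL2, drop_sum_eq]
    set M' := A * Mx * A' with hM'def
    have hξval : mval ξ = 1 + M' := by
      rw [hξdef, mval_mul, mval_mul, htp, ← hA, ← hA']
      rw [mul_add, mul_one, add_mul]
      rw [mval_mul_inv g]
    have hLM' : LM M' := LM_conj hm (mval_upper g) (mval_upper g⁻¹) hLM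
    have hadd := ADD (pos := pos) (hb := hb) (hpos := hpos) (a := a) (ha := ha)
      (t := t) (ht := ht) (hsur := hsur) (hm := hm) w ξ M' hξval hLM' k
    rw [halg, hadd]
    have hpek : pearOf pos hb k = p := pearOf_pos pos hb p
    rw [hpek]
    -- head part
    have hent : LMUT.ec w = fun p' : Pears m =>
        MvPolynomial.eval (ev pos x) (W p'.1.1 p'.1.2) := by
      funext p'
      have hWx := hW x
      have := congrFun (congrFun hWx p'.1.1) p'.1.2
      simp only [Matrix.map_apply] at this
      exact this
    have hhead : t k w = MvPolynomial.eval (ev pos x) Q := by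
      rw [hT w, hent, hQ, eval_aeval]
    -- right-hand side
    have htco : (fun p' : Pears m => t (pos p') h) = xc pos x := funext hxc
    rw [htco, map_add, MvPolynomial.eval_rename]
    have hcomp : (xc pos x) ∘ (Subtype.val : Sh m → Pears m) = ev pos x := rfl
    rw [hcomp, ← hhead]
    congr 1
    -- linear part
    rw [hPlin, map_sum]
    have hMnentry : M' p.1.1 p.1.2 = ∑ j ∈ F2, x j * ((A * Bq (pearOf pos hb j) * A') p.1.1 p.1.2) := by
      rw [hM'def, hMxF, Finset.mul_sum, Finset.sum_mul]
      rw [Matrix.sum_apply]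
      apply Finset.sum_congr rfl
      intro j _
      rw [mul_smul_comm, smul_mul_assoc, Matrix.smul_apply, smul_eq_mul]
    rw [hMnentry]
    push_cast
    have hbij : ∑ q ∈ Flong, MvPolynomial.eval (xc pos x) (MvPolynomial.C (coef q) * MvPolynomial.X q)
        = ∑ j ∈ F2, ((x j : ℚ) * (((A * Bq (pearOf pos hb j) * A') p.1.1 p.1.2 : ℤ) : ℚ)) := by
      apply Finset.sum_bij (i := fun (q : Pears m) (_ : q ∈ Flong) => pos q)
      · intro q hq
        rw [hF2, Finset.mem_filter]
        rw [hFlong, Finset.mem_filter] at hq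
        exact ⟨Finset.mem_univ _, (long_iff_pos pos hpos hm q).mp hq.2⟩
      · intro q1 _ q2 _ heq
        exact hb.1 heq
      · intro j hj
        refine ⟨pearOf pos hb j, ?_, pos_pearOf pos hb j⟩
        rw [hFlong, Finset.mem_filter]
        rw [hF2, Finset.mem_filter] at hj
        exact ⟨Finset.mem_univ _, (long_iff pos hb hpos hm j).mpr hj.2⟩
      · intro q hq
        rw [_root_.map_mul, MvPolynomial.eval_C, MvPolynomial.eval_X]
        rw [hcoef]
        simp only [xc, pearOf_pos pos hb q]
        push_cast
        ring
    rw [hbij]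
  · -- support condition
    intro d hd hex
    obtain ⟨p', hdp', hlong⟩ := hex
    rcases Finset.mem_union.mp (MvPolynomial.support_add hd) with h1 | h1
    · exfalso
      rw [MvPolynomial.support_rename_of_injective Subtype.val_injective] at h1
      obtain ⟨u0, hu0, hdu⟩ := Finset.mem_image.mp h1
      have hp'mem : p' ∈ (Finsupp.mapDomain (Subtype.val : Sh m → Pears m) u0).support := by
        rw [← hdu] at hdp'
        exact Finsupp.mem_support_iff.mpr hdp'
      have := Finsupp.mapDomain_support hp'mem
      obtain ⟨s, _, rfl⟩ := Finset.mem_image.mp this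
      have hshort : gp (s : Pears m) < c0 m := s.2
      simp only [gp, c0] at hshort
      omega
    · have h2 := MvPolynomial.support_sum h1
      obtain ⟨q, hqF, hdq⟩ := Finset.mem_biUnion.mp h2
      rw [MvPolynomial.C_mul_X_eq_monomial] at hdq
      rw [MvPolynomial.support_monomial] at hdq
      by_cases hc : coef q = 0
      · rw [if_pos hc] at hdq
        exact absurd hdq (Finset.notMem_empty d)
      · rw [if_neg hc] at hdq
        have hd1 : d = Finsupp.single q 1 := Finset.mem_singleton.mp hdq
        rw [hd1]
        rw [Finsupp.sum_single_index]
        rfl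
end
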